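/- arXiv:2605.10774 — 9 statements merged into one kernel-verified Lean document; each statement's English description precedes it below -/
import Mathlib

section
/- A function f:[0,1]→[0,1] is a trade-off function (i.e., equals T(P,Q) for some pair of probability measures P,Q) only if it is convex, continuous, non-increasing, and satisfies f(α) ≤ 1−α for all α∈[0,1]. -/
open MeasureTheory Set Filter Topology
open scoped ENNReal

/-- The trade-off function `T(P,Q)(α) = inf { E_Q[1-φ] : φ measurable, 0 ≤ φ ≤ 1, E_P[φ] ≤ α }`. -/
noncomputable def tradeoff {X : Type*} [MeasurableSpace X] (P Q : Measure X) (α : ℝ) : ℝ :=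
  sInf {b : ℝ | ∃ φ : X → ℝ, Measurable φ ∧ (∀ x, φ x ∈ Icc (0:ℝ) 1) ∧
    (∫ x, φ x ∂P) ≤ α ∧ b = ∫ x, (1 - φ x) ∂Q}

namespace TOaux

set_option linter.unusedSectionVars false

variable {X : Type*} [MeasurableSpace X] (P Q : Measure X)
  [IsProbabilityMeasure P] [IsProbabilityMeasure Q]

def TOset (α : ℝ) : Set ℝ := {b : ℝ | ∃ φ : X → ℝ, Measurable φ ∧ (∀ x, φ x ∈ Icc (0:ℝ) 1) ∧
    (∫ x, φ x ∂P) ≤ α ∧ b = ∫ x, (1 - φ x) ∂Q}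

lemma tradeoff_eq (α : ℝ) : tradeoff P Q α = sInf (TOset P Q α) := rfl

variable {P Q}

lemma integrable_of_mem_Icc {μ : Measure X} [IsFiniteMeasure μ] {φ : X → ℝ}
    (hm : Measurable φ) (hb : ∀ x, φ x ∈ Icc (0:ℝ) 1) : Integrable φ μ := by
  refine (integrable_const (1:ℝ)).mono' hm.aestronglyMeasurable ?_
  filter_upwards with x
  rw [Real.norm_eq_abs, abs_le]
  exact ⟨by linarith [(hb x).1], (hb x).2⟩

lemma integrable_one_sub_of_mem_Icc {μ : Measure X} [IsFiniteMeasure μ] {φ : X → ℝ}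
    (hm : Measurable φ) (hb : ∀ x, φ x ∈ Icc (0:ℝ) 1) :
    Integrable (fun x => 1 - φ x) μ :=
  (integrable_const (1:ℝ)).sub (integrable_of_mem_Icc hm hb)

lemma const_mem_TOset {α : ℝ} (hα : α ∈ Icc (0:ℝ) 1) : (1 - α) ∈ TOset P Q α := by
  refine ⟨fun _ => α, measurable_const, fun _ => hα, by simp, by simp⟩

lemma TOset_nonneg {α b : ℝ} (hb : b ∈ TOset P Q α) : 0 ≤ b := by
  obtain ⟨φ, _, hIcc, _, rfl⟩ := hb
  refine integral_nonneg fun x => ?_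
  simp only [Pi.zero_apply]
  linarith [(hIcc x).2]

lemma bddBelow_TOset (α : ℝ) : BddBelow (TOset P Q α) :=
  ⟨0, fun _ hb => TOset_nonneg hb⟩

lemma TOset_mono {α β : ℝ} (h : α ≤ β) : TOset P Q α ⊆ TOset P Q β := by
  rintro b ⟨φ, hm, hIcc, hP, rfl⟩
  exact ⟨φ, hm, hIcc, hP.trans h, rfl⟩

lemma tradeoff_le_one_sub {α : ℝ} (hα : α ∈ Icc (0:ℝ) 1) : tradeoff P Q α ≤ 1 - α :=
  csInf_le (bddBelow_TOset α) (const_mem_TOset hα)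

lemma tradeoff_anti {α β : ℝ} (hα : α ∈ Icc (0:ℝ) 1) (h : α ≤ β) :
    tradeoff P Q β ≤ tradeoff P Q α :=
  csInf_le_csInf (bddBelow_TOset β) ⟨_, const_mem_TOset hα⟩ (TOset_mono h)

lemma tradeoff_convex_ineq {α β a b : ℝ} (hα : α ∈ Icc (0:ℝ) 1) (hβ : β ∈ Icc (0:ℝ) 1)
    (ha : 0 ≤ a) (hb : 0 ≤ b) (hab : a + b = 1) :
    tradeoff P Q (a * α + b * β) ≤ a * tradeoff P Q α + b * tradeoff P Q β := by
  refine le_of_forall_pos_le_add fun ε hε => ?_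
  obtain ⟨b₁, hb₁, hb₁'⟩ :=
    Real.lt_sInf_add_pos (⟨_, const_mem_TOset (P := P) (Q := Q) hα⟩) hε
  obtain ⟨b₂, hb₂, hb₂'⟩ :=
    Real.lt_sInf_add_pos (⟨_, const_mem_TOset (P := P) (Q := Q) hβ⟩) hε
  obtain ⟨φ₁, hm₁, hI₁, hP₁, rfl⟩ := hb₁
  obtain ⟨φ₂, hm₂, hI₂, hP₂, rfl⟩ := hb₂
  have key : tradeoff P Q (a * α + b * β) ≤
      a * (∫ x, (1 - φ₁ x) ∂Q) + b * (∫ x, (1 - φ₂ x) ∂Q) := by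
    refine csInf_le (bddBelow_TOset _) ⟨fun x => a * φ₁ x + b * φ₂ x, by fun_prop, ?_, ?_, ?_⟩
    · intro x
      simp only [mem_Icc]
      constructor
      · nlinarith [(hI₁ x).1, (hI₂ x).1]
      · nlinarith [(hI₁ x).2, (hI₂ x).2]
    · rw [integral_add ((integrable_of_mem_Icc hm₁ hI₁).const_mul a)
        ((integrable_of_mem_Icc hm₂ hI₂).const_mul b), integral_const_mul, integral_const_mul]
      have h1 : a * ∫ x, φ₁ x ∂P ≤ a * α := mul_le_mul_of_nonneg_left hP₁ ha
      have h2 : b * ∫ x, φ₂ x ∂P ≤ b * β := mul_le_mul_of_nonneg_left hP₂ hb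
      linarith
    · rw [← integral_const_mul, ← integral_const_mul,
        ← integral_add ((integrable_one_sub_of_mem_Icc hm₁ hI₁).const_mul a)
          ((integrable_one_sub_of_mem_Icc hm₂ hI₂).const_mul b)]
      refine integral_congr_ae (Eventually.of_forall fun x => ?_)
      have : a + b = 1 := hab
      ring_nf
      nlinarith [this]
  have h1 : a * (∫ x, (1 - φ₁ x) ∂Q) ≤ a * (tradeoff P Q α + ε) :=
    mul_le_mul_of_nonneg_left hb₁'.le ha
  have h2 : b * (∫ x, (1 - φ₂ x) ∂Q) ≤ b * (tradeoff P Q β + ε) :=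
    mul_le_mul_of_nonneg_left hb₂'.le hb
  nlinarith [key]

variable (P Q)

lemma tail_tendsto :
    Tendsto (fun n : ℕ => ∫⁻ x in {y : X | (n : ℝ≥0∞) < Q.rnDeriv P y}, Q.rnDeriv P x ∂P)
      atTop (𝓝 0) := by
  have hmeas : Measurable (Q.rnDeriv P) := Measure.measurable_rnDeriv Q P
  have hms : ∀ n : ℕ, MeasurableSet {y : X | (n : ℝ≥0∞) < Q.rnDeriv P y} :=
    fun n => measurableSet_lt measurable_const hmeas
  have hfin : ∫⁻ x, Q.rnDeriv P x ∂P ≠ ∞ := (Measure.lintegral_rnDeriv_lt_top Q P).ne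
  have key := tendsto_lintegral_of_dominated_convergence (μ := P)
    (F := fun n x => ({y : X | (n:ℝ≥0∞) < Q.rnDeriv P y}).indicator (Q.rnDeriv P) x)
    (f := fun _ => 0) (Q.rnDeriv P)
    (fun n => hmeas.indicator (hms n))
    (fun n => Eventually.of_forall fun x => indicator_le_self _ _ x)
    hfin
    ?_
  · simpa [lintegral_indicator (hms _)] using key
  · filter_upwards [Measure.rnDeriv_lt_top Q P] with x hx
    obtain ⟨n₀, hn₀⟩ := ENNReal.exists_nat_gt hx.ne
    refine tendsto_atTop_of_eventually_const (i₀ := n₀) fun n hn => ?_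
    refine indicator_of_notMem ?_ _
    simp only [mem_setOf_eq, not_lt]
    exact le_trans hn₀.le (by exact_mod_cast Nat.cast_le.mpr hn)

variable {P Q}

lemma tradeoff_lower_bound {α : ℝ} (hα : 0 ≤ α) {b : ℝ} (hb : b ∈ TOset P Q α) (n : ℕ) :
    ((P.withDensity (Q.rnDeriv P)) univ).toReal
      - ((n : ℝ) * α + (∫⁻ x in {y : X | (n:ℝ≥0∞) < Q.rnDeriv P y}, Q.rnDeriv P x ∂P).toReal)
      ≤ b := by
  obtain ⟨φ, hm, hI, hP, rfl⟩ := hb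
  set μ := P.withDensity (Q.rnDeriv P) with hμ
  have hle : μ ≤ Q := Measure.withDensity_rnDeriv_le Q P
  haveI : IsFiniteMeasure μ := isFiniteMeasure_of_le Q hle
  have hmeas : Measurable (Q.rnDeriv P) := Measure.measurable_rnDeriv Q P
  have hms : MeasurableSet {y : X | (n:ℝ≥0∞) < Q.rnDeriv P y} :=
    measurableSet_lt measurable_const hmeas
  have hIntP : Integrable φ P := integrable_of_mem_Icc hm hI
  have hIntμ : Integrable φ μ := integrable_of_mem_Icc hm hI
  have hIntQ : Integrable (fun x => 1 - φ x) Q := integrable_one_sub_of_mem_Icc hm hI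
  have step1 : ∫ x, (1 - φ x) ∂μ ≤ ∫ x, (1 - φ x) ∂Q :=
    integral_mono_measure hle (Eventually.of_forall fun x => by
      simp only [Pi.zero_apply]; linarith [(hI x).2]) hIntQ
  have step2 : ∫ x, (1 - φ x) ∂μ = (μ univ).toReal - ∫ x, φ x ∂μ := by
    rw [integral_sub (integrable_const 1) hIntμ, integral_const, smul_eq_mul, mul_one]
    rfl
  have h0 : 0 ≤ᵐ[μ] φ := Eventually.of_forall fun x => (hI x).1
  have h0P : 0 ≤ᵐ[P] φ := Eventually.of_forall fun x => (hI x).1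
  have hlin : ∫⁻ x, ENNReal.ofReal (φ x) ∂μ
      = ∫⁻ x, Q.rnDeriv P x * ENNReal.ofReal (φ x) ∂P := by
    rw [hμ, lintegral_withDensity_eq_lintegral_mul P hmeas (by fun_prop)]
    rfl
  have hpt : ∀ x, Q.rnDeriv P x * ENNReal.ofReal (φ x)
      ≤ (n : ℝ≥0∞) * ENNReal.ofReal (φ x)
        + ({y : X | (n:ℝ≥0∞) < Q.rnDeriv P y}).indicator (Q.rnDeriv P) x := by
    intro x
    rcases le_or_gt (Q.rnDeriv P x) (n : ℝ≥0∞) with h | h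
    · exact le_add_right (mul_le_mul_left h _)
    · calc Q.rnDeriv P x * ENNReal.ofReal (φ x) ≤ Q.rnDeriv P x * 1 := by
            exact mul_le_mul_right (by
              rw [← ENNReal.ofReal_one]
              exact ENNReal.ofReal_le_ofReal (hI x).2) _
        _ = ({y : X | (n:ℝ≥0∞) < Q.rnDeriv P y}).indicator (Q.rnDeriv P) x := by
            rw [mul_one]
            exact (Set.indicator_of_mem
              (show x ∈ {y : X | (n:ℝ≥0∞) < Q.rnDeriv P y} from h) (Q.rnDeriv P)).symm
        _ ≤ _ := le_add_self
  have hofReal : ∫⁻ x, ENNReal.ofReal (φ x) ∂P ≤ ENNReal.ofReal α := by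
    rw [← ofReal_integral_eq_lintegral_ofReal hIntP h0P]
    exact ENNReal.ofReal_le_ofReal hP
  have htail_ne : (∫⁻ x in {y : X | (n:ℝ≥0∞) < Q.rnDeriv P y}, Q.rnDeriv P x ∂P) ≠ ∞ := by
    refine ne_top_of_le_ne_top (Measure.lintegral_rnDeriv_lt_top Q P).ne ?_
    exact lintegral_mono' Measure.restrict_le_self le_rfl
  have step3 : ∫ x, φ x ∂μ
      ≤ (n : ℝ) * α + (∫⁻ x in {y : X | (n:ℝ≥0∞) < Q.rnDeriv P y}, Q.rnDeriv P x ∂P).toReal := by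
    rw [integral_eq_lintegral_of_nonneg_ae h0 hm.aestronglyMeasurable]
    have hb : ∫⁻ x, ENNReal.ofReal (φ x) ∂μ
        ≤ (n : ℝ≥0∞) * ENNReal.ofReal α
          + ∫⁻ x in {y : X | (n:ℝ≥0∞) < Q.rnDeriv P y}, Q.rnDeriv P x ∂P := by
      rw [hlin, ← lintegral_indicator hms]
      calc ∫⁻ x, Q.rnDeriv P x * ENNReal.ofReal (φ x) ∂P
          ≤ ∫⁻ x, ((n : ℝ≥0∞) * ENNReal.ofReal (φ x)
            + ({y : X | (n:ℝ≥0∞) < Q.rnDeriv P y}).indicator (Q.rnDeriv P) x) ∂P :=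
            lintegral_mono hpt
        _ = (n : ℝ≥0∞) * ∫⁻ x, ENNReal.ofReal (φ x) ∂P
            + ∫⁻ x, ({y : X | (n:ℝ≥0∞) < Q.rnDeriv P y}).indicator (Q.rnDeriv P) x ∂P := by
            rw [lintegral_add_left (by fun_prop), lintegral_const_mul _ (by fun_prop)]
        _ ≤ _ := by gcongr
    have hrhs_ne : (n : ℝ≥0∞) * ENNReal.ofReal α
        + (∫⁻ x in {y : X | (n:ℝ≥0∞) < Q.rnDeriv P y}, Q.rnDeriv P x ∂P) ≠ ∞ :=
      ENNReal.add_ne_top.mpr ⟨ENNReal.mul_ne_top (ENNReal.natCast_ne_top n)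
        ENNReal.ofReal_ne_top, htail_ne⟩
    calc (∫⁻ x, ENNReal.ofReal (φ x) ∂μ).toReal
        ≤ ((n : ℝ≥0∞) * ENNReal.ofReal α
          + (∫⁻ x in {y : X | (n:ℝ≥0∞) < Q.rnDeriv P y}, Q.rnDeriv P x ∂P)).toReal :=
          ENNReal.toReal_mono hrhs_ne hb
      _ = (n : ℝ) * α + (∫⁻ x in {y : X | (n:ℝ≥0∞) < Q.rnDeriv P y}, Q.rnDeriv P x ∂P).toReal := by
          rw [ENNReal.toReal_add (ENNReal.mul_ne_top (ENNReal.natCast_ne_top n)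
            ENNReal.ofReal_ne_top) htail_ne, ENNReal.toReal_mul, ENNReal.toReal_natCast,
            ENNReal.toReal_ofReal hα]
  linarith

variable (P Q)

lemma tradeoff_zero_le :
    tradeoff P Q 0 ≤ ((P.withDensity (Q.rnDeriv P)) univ).toReal := by
  haveI : IsFiniteMeasure (P.withDensity (Q.rnDeriv P)) :=
    isFiniteMeasure_of_le Q (Measure.withDensity_rnDeriv_le Q P)
  have h := Measure.mutuallySingular_singularPart Q P
  set t := h.nullSet with ht
  have htm : MeasurableSet t := h.measurableSet_nullSet
  have hsing : Q.singularPart P t = 0 := h.measure_nullSet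
  have hPtc : P tᶜ = 0 := h.measure_compl_nullSet
  have hmem : (∫ x, (1 - tᶜ.indicator (fun _ => (1:ℝ)) x) ∂Q) ∈ TOset P Q 0 := by
    refine ⟨tᶜ.indicator (fun _ => 1), measurable_const.indicator htm.compl, ?_, ?_, rfl⟩
    · intro x
      by_cases hx : x ∈ tᶜ <;>
        simp [indicator_of_mem, indicator_of_notMem, hx, mem_Icc]
    · rw [integral_indicator_const _ htm.compl]
      simp [Measure.real, hPtc]
  refine le_trans (csInf_le (bddBelow_TOset 0) hmem) ?_
  have hint : Integrable (tᶜ.indicator fun _ => (1:ℝ)) Q :=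
    (integrable_const 1).indicator htm.compl
  rw [integral_sub (integrable_const 1) hint, integral_const,
    integral_indicator_const _ htm.compl]
  simp only [Measure.real, measure_univ, ENNReal.toReal_one, one_smul, smul_eq_mul, mul_one, one_mul]
  have hQt : Q t = (P.withDensity (Q.rnDeriv P)) t := by
    conv_lhs => rw [← Measure.singularPart_add_rnDeriv Q P]
    rw [Measure.add_apply, hsing, zero_add]
  have hsum : Q t + Q tᶜ = 1 := by rw [measure_add_measure_compl htm, measure_univ]
  have h1 : (Q t).toReal + (Q tᶜ).toReal = 1 := by
    rw [← ENNReal.toReal_add (measure_ne_top _ _) (measure_ne_top _ _), hsum]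
    simp
  have h2 : (Q t).toReal ≤ ((P.withDensity (Q.rnDeriv P)) univ).toReal := by
    rw [hQt]
    exact ENNReal.toReal_mono (measure_ne_top _ _) (measure_mono (subset_univ t))
  linarith

lemma tradeoff_zero_cont {ε : ℝ} (hε : 0 < ε) :
    ∃ δ > 0, ∀ α ∈ Icc (0:ℝ) 1, α < δ → tradeoff P Q 0 - tradeoff P Q α ≤ ε := by
  obtain ⟨n, hn⟩ : ∃ n : ℕ,
      (∫⁻ x in {y : X | (n:ℝ≥0∞) < Q.rnDeriv P y}, Q.rnDeriv P x ∂P).toReal < ε/2 := by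
    obtain ⟨n, hn⟩ :=
      ((tail_tendsto P Q).eventually_lt_const (ENNReal.ofReal_pos.mpr (half_pos hε))).exists
    exact ⟨n, ENNReal.toReal_lt_of_lt_ofReal hn⟩
  refine ⟨(ε/2)/(n+1), by positivity, fun α hα hαδ => ?_⟩
  have hlb : ((P.withDensity (Q.rnDeriv P)) univ).toReal
      - ((n : ℝ) * α + (∫⁻ x in {y : X | (n:ℝ≥0∞) < Q.rnDeriv P y}, Q.rnDeriv P x ∂P).toReal)
      ≤ tradeoff P Q α := by
    rw [tradeoff_eq]
    exact le_csInf ⟨_, const_mem_TOset hα⟩ fun b hb => tradeoff_lower_bound hα.1 hb n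
  have hub := tradeoff_zero_le P Q
  have hna : (n:ℝ) * α ≤ ε/2 := by
    have h1 : (n:ℝ) * α ≤ ((n:ℝ)+1) * ((ε/2)/((n:ℝ)+1)) := by
      apply mul_le_mul (by linarith) hαδ.le hα.1 (by positivity)
    have h2 : ((n:ℝ)+1) * ((ε/2)/((n:ℝ)+1)) = ε/2 := by
      field_simp
    push_cast at hαδ h1 ⊢
    linarith
  linarith

end TOaux

/-- a function `f : [0,1] → [0,1]` is a trade-off function only if it is
convex, continuous, non-increasing and satisfies `f α ≤ 1 - α` on `[0,1]`. -/
theorem stmt0 {X : Type*} [MeasurableSpace X] (P Q : Measure X)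
    [IsProbabilityMeasure P] [IsProbabilityMeasure Q]
    (f : ℝ → ℝ) (hrange : ∀ α ∈ Icc (0:ℝ) 1, f α ∈ Icc (0:ℝ) 1)
    (hf : ∀ α ∈ Icc (0:ℝ) 1, f α = tradeoff P Q α) :
    ConvexOn ℝ (Icc (0:ℝ) 1) f ∧ ContinuousOn f (Icc (0:ℝ) 1) ∧
      AntitoneOn f (Icc (0:ℝ) 1) ∧ ∀ α ∈ Icc (0:ℝ) 1, f α ≤ 1 - α := by
  have hub : ∀ α ∈ Icc (0:ℝ) 1, f α ≤ 1 - α := fun α hα => by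
    rw [hf α hα]; exact TOaux.tradeoff_le_one_sub hα
  have hanti : AntitoneOn f (Icc (0:ℝ) 1) := fun a ha b hb hab => by
    rw [hf a ha, hf b hb]; exact TOaux.tradeoff_anti ha hab
  have hconv : ConvexOn ℝ (Icc (0:ℝ) 1) f := by
    refine ⟨convex_Icc 0 1, fun x hx y hy a b ha hb hab => ?_⟩
    have hmem : a • x + b • y ∈ Icc (0:ℝ) 1 := (convex_Icc 0 1) hx hy ha hb hab
    rw [hf _ hmem, hf x hx, hf y hy]
    simpa [smul_eq_mul] using TOaux.tradeoff_convex_ineq (P := P) (Q := Q) hx hy ha hb hab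
  refine ⟨hconv, ?_, hanti, hub⟩
  intro x hx
  rcases eq_or_lt_of_le hx.1 with h0 | h0
  · -- x = 0
    rw [← h0]
    rw [Metric.continuousWithinAt_iff]
    intro ε hε
    obtain ⟨δ, hδ, hδ'⟩ := TOaux.tradeoff_zero_cont P Q (half_pos hε)
    refine ⟨δ, hδ, fun {α} hα hd => ?_⟩
    have h0mem : (0:ℝ) ∈ Icc (0:ℝ) 1 := ⟨le_refl 0, zero_le_one⟩
    have hmono : f α ≤ f 0 := hanti h0mem hα hα.1
    have hαδ : α < δ := by
      rwa [Real.dist_eq, sub_zero, abs_of_nonneg hα.1] at hd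
    have hdiff : f 0 - f α ≤ ε/2 := by
      rw [hf 0 h0mem, hf α hα]
      exact hδ' α hα hαδ
    rw [Real.dist_eq, abs_of_nonpos (by linarith)]
    linarith
  · rcases eq_or_lt_of_le hx.2 with h1 | h1
    · -- x = 1
      rw [h1]
      have h1mem : (1:ℝ) ∈ Icc (0:ℝ) 1 := ⟨zero_le_one, le_refl 1⟩
      have hf1 : f 1 = 0 := le_antisymm (by simpa using hub 1 h1mem) (hrange 1 h1mem).1
      rw [Metric.continuousWithinAt_iff]
      intro ε hε
      refine ⟨ε, hε, fun {α} hα hd => ?_⟩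
      rw [Real.dist_eq, abs_of_nonpos (by linarith [hα.2])] at hd
      rw [hf1, Real.dist_eq, sub_zero, abs_of_nonneg (hrange α hα).1]
      calc f α ≤ 1 - α := hub α hα
        _ < ε := by linarith
    · -- interior point
      have hc := hconv.continuousOn_interior
      rw [interior_Icc] at hc
      exact (hc.continuousAt (isOpen_Ioo.mem_nhds ⟨h0, h1⟩)).continuousWithinAt
end

section
/- For probability measures P,Q on a measurable space and ε∈[0,1], the total variation distance satisfies d_TV(P,Q) ≤ ε if and only if T(P,Q)(α) ≥ (1−ε−α)_+ for all α∈[0,1]. -/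
open MeasureTheory Set

/-- Total variation distance `sup_A |P(A) - Q(A)|`. -/
noncomputable def dTV {X : Type*} [MeasurableSpace X] (P Q : Measure X) : ℝ :=
  sSup {r : ℝ | ∃ A : Set X, MeasurableSet A ∧ r = |(P A).toReal - (Q A).toReal|}

lemma integrable_of_mem_Icc {X : Type*} [MeasurableSpace X] (μ : Measure X)
    [IsProbabilityMeasure μ] {φ : X → ℝ} (hφ : Measurable φ)
    (hb : ∀ x, φ x ∈ Icc (0:ℝ) 1) : Integrable φ μ := by
  refine (integrable_const (1:ℝ)).mono' hφ.aestronglyMeasurable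
    (Filter.Eventually.of_forall fun x => ?_)
  rw [Real.norm_eq_abs, abs_le]
  exact ⟨by linarith [(hb x).1], (hb x).2⟩

lemma layer_meas {X : Type*} [MeasurableSpace X] (μ : Measure X)
    [IsProbabilityMeasure μ] {φ : X → ℝ} :
    Antitone (fun t => (μ {a | t ≤ φ a}).toReal) := by
  intro s t hst
  exact ENNReal.toReal_mono (measure_ne_top μ _)
    (measure_mono fun a ha => le_trans hst ha)

lemma key_ineq {X : Type*} [MeasurableSpace X] (P Q : Measure X)
    [IsProbabilityMeasure P] [IsProbabilityMeasure Q] {ε : ℝ}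
    {φ : X → ℝ} (hφ : Measurable φ) (hb : ∀ x, φ x ∈ Icc (0:ℝ) 1)
    (hA : ∀ A : Set X, MeasurableSet A → (Q A).toReal - (P A).toReal ≤ ε) :
    ∫ x, φ x ∂Q ≤ (∫ x, φ x ∂P) + ε := by
  have hnn : ∀ (μ : Measure X), (0 : X → ℝ) ≤ᵐ[μ] φ :=
    fun μ => Filter.Eventually.of_forall fun x => (hb x).1
  have hub : ∀ (μ : Measure X), φ ≤ᵐ[μ] (fun _ => (1:ℝ)) :=
    fun μ => Filter.Eventually.of_forall fun x => (hb x).2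
  have hQ := (integrable_of_mem_Icc Q hφ hb).integral_eq_integral_Ioc_meas_le (hnn Q) (hub Q)
  have hP := (integrable_of_mem_Icc P hφ hb).integral_eq_integral_Ioc_meas_le (hnn P) (hub P)
  rw [hQ, hP]
  simp only [measureReal_def]
  set fQ := fun t : ℝ => (Q {a | t ≤ φ a}).toReal with hfQ
  set fP := fun t : ℝ => (P {a | t ≤ φ a}).toReal with hfP
  have hintQ : IntegrableOn fQ (Ioc (0:ℝ) 1) volume := by
    refine (((integrableOn_const_iff (C := (1:ℝ))).mpr (Or.inr ?_)) : IntegrableOn (fun _ => (1:ℝ)) _ _).mono'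
      ((layer_meas Q).measurable.aestronglyMeasurable)
      (Filter.Eventually.of_forall fun t => ?_)
    · simp
    · rw [Real.norm_eq_abs, abs_le]
      constructor
      · linarith [ENNReal.toReal_nonneg (a := Q {a | t ≤ φ a})]
      · exact ENNReal.toReal_le_of_le_ofReal one_pos.le (by simpa using prob_le_one)
  have hintP : IntegrableOn fP (Ioc (0:ℝ) 1) volume := by
    refine (((integrableOn_const_iff (C := (1:ℝ))).mpr (Or.inr ?_)) : IntegrableOn (fun _ => (1:ℝ)) _ _).mono'
      ((layer_meas P).measurable.aestronglyMeasurable)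
      (Filter.Eventually.of_forall fun t => ?_)
    · simp
    · rw [Real.norm_eq_abs, abs_le]
      constructor
      · linarith [ENNReal.toReal_nonneg (a := P {a | t ≤ φ a})]
      · exact ENNReal.toReal_le_of_le_ofReal one_pos.le (by simpa using prob_le_one)
  have hdiff : (∫ t in Ioc (0:ℝ) 1, fQ t) - (∫ t in Ioc (0:ℝ) 1, fP t)
      = ∫ t in Ioc (0:ℝ) 1, (fQ t - fP t) := (integral_sub hintQ hintP).symm
  have hmono : (∫ t in Ioc (0:ℝ) 1, (fQ t - fP t)) ≤ ∫ t in Ioc (0:ℝ) 1, (ε : ℝ) := by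
    refine setIntegral_mono_on (hintQ.sub hintP) ((integrableOn_const_iff (C := ε)).mpr (Or.inr (by simp)))
      measurableSet_Ioc (fun t _ => ?_)
    exact hA _ (hφ measurableSet_Ici)
  have hconst : (∫ _ in Ioc (0:ℝ) 1, (ε : ℝ)) = ε := by
    simp [Real.volume_Ioc]
  linarith [hmono, hdiff.symm.le, hdiff.le, hconst.le]

/-- `d_TV(P,Q) ≤ ε` iff `T(P,Q)(α) ≥ (1-ε-α)₊` for all `α ∈ [0,1]`. -/
theorem stmt2 {X : Type*} [MeasurableSpace X] (P Q : Measure X)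
    [IsProbabilityMeasure P] [IsProbabilityMeasure Q]
    (ε : ℝ) (hε : ε ∈ Icc (0:ℝ) 1) :
    dTV P Q ≤ ε ↔ ∀ α ∈ Icc (0:ℝ) 1, max (1 - ε - α) 0 ≤ tradeoff P Q α := by
  constructor
  · intro h α hα
    have hA : ∀ A : Set X, MeasurableSet A → (Q A).toReal - (P A).toReal ≤ ε := by
      intro A hAm
      have hmem : |(P A).toReal - (Q A).toReal| ∈
          {r : ℝ | ∃ A : Set X, MeasurableSet A ∧ r = |(P A).toReal - (Q A).toReal|} :=
        ⟨A, hAm, rfl⟩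
      have hbdd : BddAbove {r : ℝ | ∃ A : Set X, MeasurableSet A ∧
          r = |(P A).toReal - (Q A).toReal|} := by
        refine ⟨1, fun r hr => ?_⟩
        obtain ⟨B, hB, rfl⟩ := hr
        have h1 : (P B).toReal ≤ 1 := ENNReal.toReal_le_of_le_ofReal one_pos.le (by simpa using prob_le_one)
        have h2 : (Q B).toReal ≤ 1 := ENNReal.toReal_le_of_le_ofReal one_pos.le (by simpa using prob_le_one)
        rw [abs_le]
        constructor <;> [linarith [ENNReal.toReal_nonneg (a := P B)]; linarith [ENNReal.toReal_nonneg (a := Q B)]]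
      have := le_csSup hbdd hmem
      have habs : |(P A).toReal - (Q A).toReal| ≤ ε := le_trans this h
      have := abs_le.mp habs
      linarith [this.1]
    -- tradeoff set nonempty
    refine le_csInf ⟨∫ x, (1 - (fun _ : X => α) x) ∂Q, (fun _ => α), measurable_const, fun _ => hα, by
      simp, rfl⟩ ?_
    rintro b ⟨φ, hφ, hbφ, hint, rfl⟩
    have h0 : (0:ℝ) ≤ ∫ x, (1 - φ x) ∂Q :=
      integral_nonneg fun x => by simp only [Pi.zero_apply]; linarith [(hbφ x).2]
    have hsub : (∫ x, (1 - φ x) ∂Q) = 1 - ∫ x, φ x ∂Q := by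
      rw [integral_sub (integrable_const 1) (integrable_of_mem_Icc Q hφ hbφ)]
      simp
    have hk := key_ineq P Q hφ hbφ hA
    rw [max_le_iff]
    exact ⟨by rw [hsub]; linarith, h0⟩
  · intro h
    refine csSup_le ⟨0, ∅, MeasurableSet.empty, by simp⟩ ?_
    rintro r ⟨A, hAm, rfl⟩
    have key : ∀ B : Set X, MeasurableSet B → (Q B).toReal - (P B).toReal ≤ ε := by
      intro B hBm
      have hPB : (P B).toReal ∈ Icc (0:ℝ) 1 :=
        ⟨ENNReal.toReal_nonneg, ENNReal.toReal_le_of_le_ofReal one_pos.le (by simpa using prob_le_one)⟩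
      have hQB : (Q B).toReal ≤ 1 := ENNReal.toReal_le_of_le_ofReal one_pos.le (by simpa using prob_le_one)
      have hmem : (∫ x, (1 - B.indicator (1 : X → ℝ) x) ∂Q) ∈
          {b : ℝ | ∃ φ : X → ℝ, Measurable φ ∧ (∀ x, φ x ∈ Icc (0:ℝ) 1) ∧
            (∫ x, φ x ∂P) ≤ (P B).toReal ∧ b = ∫ x, (1 - φ x) ∂Q} := by
        refine ⟨B.indicator (1 : X → ℝ), (measurable_one.indicator hBm), fun x => ?_, ?_, rfl⟩
        · by_cases hx : x ∈ B <;> simp [Set.indicator_apply, hx]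
        · rw [integral_indicator_one hBm]; exact le_rfl
      have hbdd : BddBelow {b : ℝ | ∃ φ : X → ℝ, Measurable φ ∧ (∀ x, φ x ∈ Icc (0:ℝ) 1) ∧
            (∫ x, φ x ∂P) ≤ (P B).toReal ∧ b = ∫ x, (1 - φ x) ∂Q} := by
        refine ⟨0, fun b hb => ?_⟩
        obtain ⟨φ, hφ, hbφ, _, rfl⟩ := hb
        exact integral_nonneg fun x => by simp only [Pi.zero_apply]; linarith [(hbφ x).2]
      have hle : tradeoff P Q (P B).toReal ≤ ∫ x, (1 - B.indicator (1 : X → ℝ) x) ∂Q :=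
        csInf_le hbdd hmem
      have hval : (∫ x, (1 - B.indicator (1 : X → ℝ) x) ∂Q) = 1 - (Q B).toReal := by
        rw [integral_sub (integrable_const 1)]
        · rw [integral_indicator_one hBm]; simp; rfl
        · exact (integrable_const (1:ℝ)).indicator hBm
      have hbound := h (P B).toReal hPB
      have := le_trans (le_trans (le_max_left _ _) hbound) hle
      rw [hval] at this
      linarith
    have h1 := key A hAm
    have h2 := key Aᶜ hAm.compl
    have hPc : (P Aᶜ).toReal = 1 - (P A).toReal := by
      rw [measure_compl hAm (measure_ne_top P A), measure_univ,
        ENNReal.toReal_sub_of_le prob_le_one ENNReal.one_ne_top]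
      simp
    have hQc : (Q Aᶜ).toReal = 1 - (Q A).toReal := by
      rw [measure_compl hAm (measure_ne_top Q A), measure_univ,
        ENNReal.toReal_sub_of_le prob_le_one ENNReal.one_ne_top]
      simp
    rw [hPc, hQc] at h2
    rw [abs_le]
    constructor <;> linarith
end

section
/- If d_TV(P,P') ≤ η₁ and d_TV(Q,Q') ≤ η₂, then for every α∈[0,1] with α+η₁ ≤ 1, T(P,Q)(α) ≥ T(P',Q')(α+η₁) − η₂. -/
open MeasureTheory Set

lemma dTV_bddAbove {X : Type*} [MeasurableSpace X] (P Q : Measure X)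
    [IsProbabilityMeasure P] [IsProbabilityMeasure Q] :
    BddAbove {r : ℝ | ∃ A : Set X, MeasurableSet A ∧ r = |(P A).toReal - (Q A).toReal|} := by
  refine ⟨1, ?_⟩
  rintro r ⟨A, hA, rfl⟩
  have hP : (P A).toReal ≤ 1 := by
    have := ENNReal.toReal_mono (a := P A) (b := 1) ENNReal.one_ne_top prob_le_one
    simpa using this
  have hQ : (Q A).toReal ≤ 1 := by
    have := ENNReal.toReal_mono (a := Q A) (b := 1) ENNReal.one_ne_top prob_le_one
    simpa using this
  have h0P : (0:ℝ) ≤ (P A).toReal := ENNReal.toReal_nonneg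
  have h0Q : (0:ℝ) ≤ (Q A).toReal := ENNReal.toReal_nonneg
  rw [abs_sub_le_iff]
  constructor <;> linarith

lemma abs_le_dTV {X : Type*} [MeasurableSpace X] (P Q : Measure X)
    [IsProbabilityMeasure P] [IsProbabilityMeasure Q] {A : Set X} (hA : MeasurableSet A) :
    |(P A).toReal - (Q A).toReal| ≤ dTV P Q :=
  le_csSup (dTV_bddAbove P Q) ⟨A, hA, rfl⟩

lemma dTV_comm {X : Type*} [MeasurableSpace X] (P Q : Measure X) : dTV P Q = dTV Q P := by
  unfold dTV
  congr 1
  ext r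
  constructor
  · rintro ⟨A, hA, rfl⟩; exact ⟨A, hA, by rw [abs_sub_comm]⟩
  · rintro ⟨A, hA, rfl⟩; exact ⟨A, hA, by rw [abs_sub_comm]⟩

lemma integrable_of_Icc {X : Type*} [MeasurableSpace X] (μ : Measure X) [IsFiniteMeasure μ]
    {φ : X → ℝ} (hφ : Measurable φ) (h01 : ∀ x, φ x ∈ Icc (0:ℝ) 1) : Integrable φ μ :=
  (integrable_const (1:ℝ)).mono' hφ.aestronglyMeasurable
    (Filter.Eventually.of_forall fun x => by
      have := h01 x; rw [Real.norm_eq_abs, abs_le]; constructor <;> linarith [this.1, this.2])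

/-- Key lemma: for `[0,1]`-valued `φ`, `∫ φ dP ≤ ∫ φ dP' + dTV P P'`. -/
lemma integral_le_add_dTV {X : Type*} [MeasurableSpace X] (P P' : Measure X)
    [IsProbabilityMeasure P] [IsProbabilityMeasure P']
    {φ : X → ℝ} (hφ : Measurable φ) (h01 : ∀ x, φ x ∈ Icc (0:ℝ) 1) :
    ∫ x, φ x ∂P ≤ (∫ x, φ x ∂P') + dTV P P' := by
  obtain ⟨A, hA, hpos, hneg⟩ :=
    (P.toSignedMeasure - P'.toSignedMeasure).exists_compl_positive_negative
  -- On A, P' ≤ P (restricted); on Aᶜ, P ≤ P'.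
  have hPA : P'.restrict A ≤ P.restrict A := by
    rw [Measure.le_iff]
    intro B hB
    rw [Measure.restrict_apply hB, Measure.restrict_apply hB]
    have h := (VectorMeasure.restrict_le_restrict_iff _ _ hA).1 hpos
      (hB.inter hA) (inter_subset_right)
    rw [VectorMeasure.sub_apply, Measure.toSignedMeasure_apply_measurable (hB.inter hA),
      Measure.toSignedMeasure_apply_measurable (hB.inter hA)] at h
    simp only [VectorMeasure.coe_zero, Pi.zero_apply] at h
    have := sub_nonneg.1 h
    exact (ENNReal.toReal_le_toReal (measure_ne_top _ _) (measure_ne_top _ _)).1 this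
  have hPAc : P.restrict Aᶜ ≤ P'.restrict Aᶜ := by
    rw [Measure.le_iff]
    intro B hB
    rw [Measure.restrict_apply hB, Measure.restrict_apply hB]
    have h := (VectorMeasure.restrict_le_restrict_iff _ _ hA.compl).1 hneg
      (hB.inter hA.compl) (inter_subset_right)
    rw [VectorMeasure.sub_apply, Measure.toSignedMeasure_apply_measurable (hB.inter hA.compl),
      Measure.toSignedMeasure_apply_measurable (hB.inter hA.compl)] at h
    simp only [VectorMeasure.coe_zero, Pi.zero_apply] at h
    have := sub_nonpos.1 h
    exact (ENNReal.toReal_le_toReal (measure_ne_top _ _) (measure_ne_top _ _)).1 this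
  have hφint : ∀ (μ : Measure X), IsFiniteMeasure μ → Integrable φ μ :=
    fun μ h => @integrable_of_Icc X _ μ h φ hφ h01
  have hψ : Measurable fun x => 1 - φ x := measurable_const.sub hφ
  have hψ01 : ∀ x, (1 - φ x) ∈ Icc (0:ℝ) 1 := fun x => ⟨by linarith [(h01 x).2], by linarith [(h01 x).1]⟩
  have hψint : ∀ (μ : Measure X), IsFiniteMeasure μ → Integrable (fun x => 1 - φ x) μ :=
    fun μ h => @integrable_of_Icc X _ μ h _ hψ hψ01
  -- split integrals
  have hsplitP : ∫ x in A, φ x ∂P + ∫ x in Aᶜ, φ x ∂P = ∫ x, φ x ∂P :=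
    integral_add_compl hA (hφint P inferInstance)
  have hsplitP' : ∫ x in A, φ x ∂P' + ∫ x in Aᶜ, φ x ∂P' = ∫ x, φ x ∂P' :=
    integral_add_compl hA (hφint P' inferInstance)
  -- on Aᶜ : ∫ φ dP ≤ ∫ φ dP'
  have h1 : ∫ x in Aᶜ, φ x ∂P ≤ ∫ x in Aᶜ, φ x ∂P' :=
    integral_mono_measure hPAc (Filter.Eventually.of_forall fun x => (h01 x).1)
      (hφint _ inferInstance)
  -- on A : ∫ (1-φ) dP' ≤ ∫ (1-φ) dP
  have h2 : ∫ x in A, (1 - φ x) ∂P' ≤ ∫ x in A, (1 - φ x) ∂P :=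
    integral_mono_measure hPA (Filter.Eventually.of_forall fun x => (hψ01 x).1)
      (hψint _ inferInstance)
  have hconstA : ∀ (μ : Measure X), IsProbabilityMeasure μ →
      ∫ x in A, (1 - φ x) ∂μ = (μ A).toReal - ∫ x in A, φ x ∂μ := by
    intro μ hμ
    rw [integral_sub (integrable_const 1) ((hφint μ inferInstance).restrict)]
    simp [Measure.restrict_apply_univ]
    rfl
  rw [hconstA P inferInstance, hconstA P' inferInstance] at h2
  have h3 : (P A).toReal - (P' A).toReal ≤ dTV P P' :=
    le_trans (le_abs_self _) (abs_le_dTV P P' hA)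
  linarith

/-- if `d_TV(P,P') ≤ η₁` and `d_TV(Q,Q') ≤ η₂` then
`T(P,Q)(α) ≥ T(P',Q')(α+η₁) − η₂` whenever `α ∈ [0,1]` and `α + η₁ ≤ 1`. -/
theorem stmt3 {X : Type*} [MeasurableSpace X] (P P' Q Q' : Measure X)
    [IsProbabilityMeasure P] [IsProbabilityMeasure P']
    [IsProbabilityMeasure Q] [IsProbabilityMeasure Q']
    (η₁ η₂ : ℝ) (h₁ : dTV P P' ≤ η₁) (h₂ : dTV Q Q' ≤ η₂)
    (α : ℝ) (hα : α ∈ Icc (0:ℝ) 1) (hα₁ : α + η₁ ≤ 1) :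
    tradeoff P' Q' (α + η₁) - η₂ ≤ tradeoff P Q α := by
  have hne : {b : ℝ | ∃ φ : X → ℝ, Measurable φ ∧ (∀ x, φ x ∈ Icc (0:ℝ) 1) ∧
      (∫ x, φ x ∂P) ≤ α ∧ b = ∫ x, (1 - φ x) ∂Q}.Nonempty := by
    refine ⟨∫ x, (1 - (fun _ : X => α) x) ∂Q, fun _ => α, measurable_const,
      fun x => ⟨hα.1, hα.2⟩, ?_, rfl⟩
    simp
  refine le_csInf hne ?_
  rintro b ⟨φ, hφ, h01, hint, rfl⟩
  rw [sub_le_iff_le_add]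
  -- φ is a valid test for (P', Q') at level α + η₁
  have hP' : (∫ x, φ x ∂P') ≤ α + η₁ := by
    have := integral_le_add_dTV P' P hφ h01
    rw [dTV_comm P' P] at this
    linarith
  have hmem : (∫ x, (1 - φ x) ∂Q') ∈ {b : ℝ | ∃ φ : X → ℝ, Measurable φ ∧
      (∀ x, φ x ∈ Icc (0:ℝ) 1) ∧ (∫ x, φ x ∂P') ≤ α + η₁ ∧ b = ∫ x, (1 - φ x) ∂Q'} :=
    ⟨φ, hφ, h01, hP', rfl⟩
  have hbdd : BddBelow {b : ℝ | ∃ φ : X → ℝ, Measurable φ ∧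
      (∀ x, φ x ∈ Icc (0:ℝ) 1) ∧ (∫ x, φ x ∂P') ≤ α + η₁ ∧ b = ∫ x, (1 - φ x) ∂Q'} := by
    refine ⟨0, ?_⟩
    rintro r ⟨ψ, hψ, hψ01, _, rfl⟩
    exact integral_nonneg fun x => by simp only [Pi.zero_apply]; linarith [(hψ01 x).2]
  have hstep : tradeoff P' Q' (α + η₁) ≤ ∫ x, (1 - φ x) ∂Q' := csInf_le hbdd hmem
  have hψ : Measurable fun x => 1 - φ x := measurable_const.sub hφ
  have hψ01 : ∀ x, (1 - φ x) ∈ Icc (0:ℝ) 1 :=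
    fun x => ⟨by linarith [(h01 x).2], by linarith [(h01 x).1]⟩
  have hQ : (∫ x, (1 - φ x) ∂Q') ≤ (∫ x, (1 - φ x) ∂Q) + η₂ := by
    have := integral_le_add_dTV Q' Q hψ hψ01
    rw [dTV_comm Q' Q] at this
    linarith
  linarith
end

section
/- Let S be a class of measurable sets containing ∅ and the whole space X, and let P,Q be probability measures. Define F(α) = inf{ Q(Aᶜ) : A∈S, P(A) ≤ α } and G(α) = inf{ β : (α,β) ∈ conv{(P(A), Q(Aᶜ)) : A∈S} } for α∈[0,1]. Then G equals the greatest convex minorant of F on [0,1]. -/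
open MeasureTheory Set

/-- the convex-hull envelope `G` of the witness points
`{(P(A), Q(Aᶜ)) : A ∈ 𝒮}` equals the greatest convex minorant of
`F(α) = inf { Q(Aᶜ) : A ∈ 𝒮, P(A) ≤ α }` on `[0,1]`. -/
theorem stmt4 {X : Type*} [MeasurableSpace X] (P Q : Measure X)
    [IsProbabilityMeasure P] [IsProbabilityMeasure Q]
    (𝒮 : Set (Set X)) (hmeas : ∀ A ∈ 𝒮, MeasurableSet A)
    (hempty : ∅ ∈ 𝒮) (huniv : univ ∈ 𝒮)
    (F G : ℝ → ℝ)
    (hF : ∀ α : ℝ, F α = sInf {b : ℝ | ∃ A ∈ 𝒮, (P A).toReal ≤ α ∧ b = (Q Aᶜ).toReal})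
    (hG : ∀ α : ℝ, G α = sInf {b : ℝ |
      (α, b) ∈ convexHull ℝ {p : ℝ × ℝ | ∃ A ∈ 𝒮, p = ((P A).toReal, (Q Aᶜ).toReal)}}) :
    (ConvexOn ℝ (Icc (0:ℝ) 1) G ∧ ∀ α ∈ Icc (0:ℝ) 1, G α ≤ F α) ∧
    (∀ g : ℝ → ℝ, ConvexOn ℝ (Icc (0:ℝ) 1) g → (∀ α ∈ Icc (0:ℝ) 1, g α ≤ F α) →
      ∀ α ∈ Icc (0:ℝ) 1, g α ≤ G α) := by
  set W : Set (ℝ × ℝ) := {p : ℝ × ℝ | ∃ A ∈ 𝒮, p = ((P A).toReal, (Q Aᶜ).toReal)} with hWdef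
  have h01 : (((0:ℝ), (1:ℝ)) : ℝ × ℝ) ∈ W := ⟨∅, hempty, by simp⟩
  have h10 : (((1:ℝ), (0:ℝ)) : ℝ × ℝ) ∈ W := ⟨univ, huniv, by simp⟩
  have hbox : convexHull ℝ W ⊆ Icc (0:ℝ) 1 ×ˢ Ici (0:ℝ) := by
    apply convexHull_min _ ((convex_Icc 0 1).prod (convex_Ici 0))
    rintro p ⟨A, hA, rfl⟩
    refine ⟨⟨ENNReal.toReal_nonneg, ?_⟩, ENNReal.toReal_nonneg⟩
    calc (P A).toReal ≤ (1 : ENNReal).toReal :=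
          ENNReal.toReal_mono ENNReal.one_ne_top prob_le_one
      _ = 1 := by simp
  have hmemS : ∀ α ∈ Icc (0:ℝ) 1, ((α, 1 - α) : ℝ × ℝ) ∈ convexHull ℝ W := by
    intro α hα
    have hc := (convex_convexHull ℝ W) (subset_convexHull ℝ W h01)
      (subset_convexHull ℝ W h10) (by linarith [hα.2] : (0:ℝ) ≤ 1 - α) hα.1 (by ring : 1 - α + α = 1)
    have heq : ((α, 1 - α) : ℝ × ℝ)
        = (1 - α) • (((0:ℝ), (1:ℝ)) : ℝ × ℝ) + α • (((1:ℝ), (0:ℝ)) : ℝ × ℝ) := by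
      simp [Prod.ext_iff]
    rw [heq]; exact hc
  have hne : ∀ α ∈ Icc (0:ℝ) 1,
      {b : ℝ | (α, b) ∈ convexHull ℝ W}.Nonempty := fun α hα => ⟨1 - α, hmemS α hα⟩
  have hbdd : ∀ α : ℝ, BddBelow {b : ℝ | (α, b) ∈ convexHull ℝ W} := by
    intro α
    exact ⟨0, fun b hb => (hbox hb).2⟩
  have hGconv : ConvexOn ℝ (Icc (0:ℝ) 1) G := by
    refine ⟨convex_Icc 0 1, fun x hx y hy a b ha hb hab => ?_⟩
    simp only [smul_eq_mul]
    rw [hG, hG, hG]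
    refine le_of_forall_pos_le_add fun ε hε => ?_
    obtain ⟨b1, hb1, hb1'⟩ := exists_lt_of_csInf_lt (hne x hx) (lt_add_of_pos_right _ hε)
    obtain ⟨b2, hb2, hb2'⟩ := exists_lt_of_csInf_lt (hne y hy) (lt_add_of_pos_right _ hε)
    have hmem : (a * x + b * y, a * b1 + b * b2) ∈ convexHull ℝ W := by
      have hc := (convex_convexHull ℝ W) hb1 hb2 ha hb hab
      have heq : ((a * x + b * y, a * b1 + b * b2) : ℝ × ℝ)
          = a • ((x, b1) : ℝ × ℝ) + b • ((y, b2) : ℝ × ℝ) := by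
        simp [Prod.ext_iff]
      rw [heq]; exact hc
    calc sInf {c : ℝ | (a * x + b * y, c) ∈ convexHull ℝ W}
        ≤ a * b1 + b * b2 := csInf_le (hbdd _) hmem
      _ ≤ a * (sInf {c : ℝ | (x, c) ∈ convexHull ℝ W} + ε)
          + b * (sInf {c : ℝ | (y, c) ∈ convexHull ℝ W} + ε) := by
            exact add_le_add (mul_le_mul_of_nonneg_left hb1'.le ha)
              (mul_le_mul_of_nonneg_left hb2'.le hb)
      _ = a * sInf {c : ℝ | (x, c) ∈ convexHull ℝ W}
          + b * sInf {c : ℝ | (y, c) ∈ convexHull ℝ W} + ε := by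
            linear_combination ε * hab
  have hFbdd : ∀ α : ℝ, BddBelow {b : ℝ | ∃ A ∈ 𝒮, (P A).toReal ≤ α ∧ b = (Q Aᶜ).toReal} := by
    intro α
    refine ⟨0, ?_⟩
    rintro b ⟨A, hA, hPA, rfl⟩
    exact ENNReal.toReal_nonneg
  have hGF : ∀ α ∈ Icc (0:ℝ) 1, G α ≤ F α := by
    intro α hα
    rw [hF, hG]
    refine le_csInf ⟨(Q (∅ : Set X)ᶜ).toReal, ∅, hempty, by simpa using hα.1, rfl⟩ ?_
    rintro b ⟨A, hA, hPA, rfl⟩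
    set x := (P A).toReal with hx
    set y := (Q Aᶜ).toReal with hy
    have hy0 : 0 ≤ y := ENNReal.toReal_nonneg
    have hxy : ((x, y) : ℝ × ℝ) ∈ W := ⟨A, hA, rfl⟩
    rcases eq_or_lt_of_le (le_trans hPA hα.2) with hx1 | hx1
    ·
      -- hx1 : x = 1 means α = 1
      have hα1 : α = 1 := le_antisymm hα.2 (hx1 ▸ hPA)
      have : ((α, y) : ℝ × ℝ) ∈ convexHull ℝ W := by
        rw [hα1, ← hx1]; exact subset_convexHull ℝ W hxy
      exact csInf_le (hbdd α) this
    · set t : ℝ := (α - x) / (1 - x) with ht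
      have h1x : (0:ℝ) < 1 - x := by linarith
      have ht0 : 0 ≤ t := div_nonneg (by linarith) h1x.le
      have ht1 : t ≤ 1 := by
        rw [ht, div_le_one h1x]; linarith [hα.2]
      have htx : t * (1 - x) = α - x := div_mul_cancel₀ _ h1x.ne'
      have hc := (convex_convexHull ℝ W) (subset_convexHull ℝ W hxy)
        (subset_convexHull ℝ W h10) (by linarith : (0:ℝ) ≤ 1 - t) ht0 (by ring)
      have heq : (1 - t) • ((x, y) : ℝ × ℝ) + t • (((1:ℝ), (0:ℝ)) : ℝ × ℝ)
          = ((α, (1 - t) * y) : ℝ × ℝ) := by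
        simp only [Prod.smul_mk, Prod.mk_add_mk, smul_eq_mul, Prod.mk.injEq]
        constructor
        · nlinarith [htx]
        · ring
      rw [heq] at hc
      calc sInf {c : ℝ | (α, c) ∈ convexHull ℝ W} ≤ (1 - t) * y := csInf_le (hbdd α) hc
        _ ≤ y := by nlinarith
  refine ⟨⟨hGconv, hGF⟩, ?_⟩
  intro g hgconv hgF α hα
  rw [hG]
  refine le_csInf (hne α hα) ?_
  intro b hb
  have hepi : convexHull ℝ W ⊆ {p : ℝ × ℝ | p.1 ∈ Icc (0:ℝ) 1 ∧ g p.1 ≤ p.2} := by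
    apply convexHull_min _ hgconv.convex_epigraph
    rintro p ⟨A, hA, rfl⟩
    have hmem01 : (P A).toReal ∈ Icc (0:ℝ) 1 := by
      refine ⟨ENNReal.toReal_nonneg, ?_⟩
      calc (P A).toReal ≤ (1 : ENNReal).toReal :=
            ENNReal.toReal_mono ENNReal.one_ne_top prob_le_one
        _ = 1 := by simp
    refine ⟨hmem01, ?_⟩
    have hF' : F (P A).toReal ≤ (Q Aᶜ).toReal := by
      rw [hF]
      exact csInf_le (hFbdd _) ⟨A, hA, le_refl _, rfl⟩
    exact le_trans (hgF _ hmem01) hF'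
  exact (hepi hb).2
end

section
/- Let S be a class of measurable sets containing ∅ and X, and suppose the pair (P,Q) is S-attainable. If f:[0,1]→[0,1] is convex, continuous, and non-increasing, and T(P,Q)(α₀) < f(α₀) for some α₀∈[0,1], then there exists S*∈S with Q((S*)ᶜ) < f(P(S*)). -/
open MeasureTheory Set
open scoped ENNReal

lemma exists_support_slope {f : ℝ → ℝ} {α₀ : ℝ}
    (hconv : ConvexOn ℝ (Icc (0:ℝ) 1) f) (hanti : AntitoneOn f (Icc (0:ℝ) 1))
    (h0 : 0 < α₀) (h1 : α₀ ≤ 1) :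
    ∃ lam : ℝ, 0 ≤ lam ∧ ∀ t ∈ Icc (0:ℝ) 1, f α₀ - lam * (t - α₀) ≤ f t := by
  have hα₀ : α₀ ∈ Icc (0:ℝ) 1 := ⟨h0.le, h1⟩
  set B : Set ℝ := (fun s => (f α₀ - f s) / (α₀ - s)) '' (Ico (0:ℝ) α₀) with hB
  have hne : B.Nonempty := ⟨_, ⟨0, ⟨le_refl _, h0⟩, rfl⟩⟩
  have hub : ∀ b ∈ B, b ≤ 0 := by
    rintro b ⟨s, hs, rfl⟩
    have hsI : s ∈ Icc (0:ℝ) 1 := ⟨hs.1, hs.2.le.trans h1⟩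
    have hle : f α₀ ≤ f s := hanti hsI hα₀ hs.2.le
    have hpos : (0:ℝ) < α₀ - s := by linarith [hs.2]
    exact div_nonpos_iff.mpr (Or.inr ⟨by linarith, hpos.le⟩)
  have hbdd : BddAbove B := ⟨0, hub⟩
  set m := sSup B with hm
  have hm0 : m ≤ 0 := csSup_le hne hub
  refine ⟨-m, by linarith, fun t ht => ?_⟩
  rcases lt_trichotomy t α₀ with hlt | heq | hgt
  · have hmem : (f α₀ - f t) / (α₀ - t) ∈ B := ⟨t, ⟨ht.1, hlt⟩, rfl⟩
    have hq : (f α₀ - f t) / (α₀ - t) ≤ m := le_csSup hbdd hmem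
    have hpos : (0:ℝ) < α₀ - t := by linarith
    rw [div_le_iff₀ hpos] at hq
    nlinarith
  · subst heq; ring_nf; nlinarith
  · have hq : m ≤ (f t - f α₀) / (t - α₀) := by
      apply csSup_le hne
      rintro b ⟨s, hs, rfl⟩
      exact hconv.slope_mono_adjacent ⟨hs.1, hs.2.le.trans h1⟩ ht hs.2 hgt
    have hpos : (0:ℝ) < t - α₀ := by linarith
    rw [le_div_iff₀ hpos] at hq
    nlinarith

/-- `(P,Q)` is `𝒮`-attainable: with `μ = (P+Q)/2`, `p = dP/dμ`, `q = dQ/dμ`, for every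
`λ ∈ [0,∞]` some `S ∈ 𝒮` coincides `μ`-a.e. with `{q > λ p}` (with `{p = 0}` for `λ = ∞`). -/
def SAttainable {X : Type*} [MeasurableSpace X] (𝒮 : Set (Set X)) (P Q : Measure X) : Prop :=
  ∀ lam : ℝ≥0∞, ∃ S ∈ 𝒮,
    ∀ᵐ x ∂((2 : ℝ≥0∞)⁻¹ • (P + Q)),
      (x ∈ S ↔
        ((lam = ⊤ ∧ P.rnDeriv ((2 : ℝ≥0∞)⁻¹ • (P + Q)) x = 0) ∨
         (lam ≠ ⊤ ∧ lam * P.rnDeriv ((2 : ℝ≥0∞)⁻¹ • (P + Q)) x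
            < Q.rnDeriv ((2 : ℝ≥0∞)⁻¹ • (P + Q)) x)))

/-- witness property: if `(P,Q)` is `𝒮`-attainable and `f` is convex,
continuous and non-increasing on `[0,1]` with `T(P,Q)(α₀) < f(α₀)` for some `α₀`, then
some `S* ∈ 𝒮` satisfies `Q((S*)ᶜ) < f(P(S*))`. -/
theorem stmt5 {X : Type*} [MeasurableSpace X] (P Q : Measure X)
    [IsProbabilityMeasure P] [IsProbabilityMeasure Q]
    (𝒮 : Set (Set X)) (hmeas : ∀ A ∈ 𝒮, MeasurableSet A)
    (hempty : ∅ ∈ 𝒮) (huniv : univ ∈ 𝒮)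
    (hatt : SAttainable 𝒮 P Q)
    (f : ℝ → ℝ) (hconv : ConvexOn ℝ (Icc (0:ℝ) 1) f)
    (hcont : ContinuousOn f (Icc (0:ℝ) 1)) (hanti : AntitoneOn f (Icc (0:ℝ) 1))
    (hrange : ∀ t ∈ Icc (0:ℝ) 1, f t ∈ Icc (0:ℝ) 1)
    (α₀ : ℝ) (hα₀ : α₀ ∈ Icc (0:ℝ) 1) (hlt : tradeoff P Q α₀ < f α₀) :
    ∃ S ∈ 𝒮, (Q Sᶜ).toReal < f ((P S).toReal) := by
  classical
  set μ : Measure X := (2 : ℝ≥0∞)⁻¹ • (P + Q) with hμdef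
  haveI hμprob : IsProbabilityMeasure μ := by
    constructor
    rw [hμdef]
    simp only [Measure.smul_apply, Measure.add_apply, measure_univ, smul_eq_mul]
    rw [one_add_one_eq_two]
    exact ENNReal.inv_mul_cancel (by norm_num) (by norm_num)
  have hPμ : P ≪ μ := by
    refine Measure.AbsolutelyContinuous.mk fun s hs h0 => ?_
    rw [hμdef] at h0
    simp only [Measure.smul_apply, Measure.add_apply, smul_eq_mul] at h0
    rcases mul_eq_zero.mp h0 with h | h
    · exact absurd h (by norm_num)
    · exact (add_eq_zero.mp h).1
  have hQμ : Q ≪ μ := by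
    refine Measure.AbsolutelyContinuous.mk fun s hs h0 => ?_
    rw [hμdef] at h0
    simp only [Measure.smul_apply, Measure.add_apply, smul_eq_mul] at h0
    rcases mul_eq_zero.mp h0 with h | h
    · exact absurd h (by norm_num)
    · exact (add_eq_zero.mp h).2
  have hp_int : Integrable (fun x => (P.rnDeriv μ x).toReal) μ :=
    Measure.integrable_toReal_rnDeriv
  have hq_int : Integrable (fun x => (Q.rnDeriv μ x).toReal) μ :=
    Measure.integrable_toReal_rnDeriv
  have hpm : Measurable (fun x => (P.rnDeriv μ x).toReal) :=
    (Measure.measurable_rnDeriv _ _).ennreal_toReal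
  have hqm : Measurable (fun x => (Q.rnDeriv μ x).toReal) :=
    (Measure.measurable_rnDeriv _ _).ennreal_toReal
  -- extract a test function witnessing tradeoff < f α₀
  have hBne : {b : ℝ | ∃ φ : X → ℝ, Measurable φ ∧ (∀ x, φ x ∈ Icc (0:ℝ) 1) ∧
      (∫ x, φ x ∂P) ≤ α₀ ∧ b = ∫ x, (1 - φ x) ∂Q}.Nonempty := by
    refine ⟨∫ x, (1 - α₀ : ℝ) ∂Q, fun _ => α₀, measurable_const, fun x => hα₀, ?_, rfl⟩
    simp [measure_univ]
  have hBbdd : BddBelow {b : ℝ | ∃ φ : X → ℝ, Measurable φ ∧ (∀ x, φ x ∈ Icc (0:ℝ) 1) ∧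
      (∫ x, φ x ∂P) ≤ α₀ ∧ b = ∫ x, (1 - φ x) ∂Q} := by
    refine ⟨0, ?_⟩
    rintro b ⟨φ, hφm, hφ01, hφP, rfl⟩
    refine integral_nonneg fun x => ?_
    simp only [Pi.zero_apply]
    linarith [(hφ01 x).2]
  rw [tradeoff] at hlt
  obtain ⟨b, ⟨φ, hφm, hφ01, hφP, rfl⟩, hblt⟩ := (csInf_lt_iff hBbdd hBne).mp hlt
  -- integrability of the four integrands
  have habs_ind : ∀ (T : Set X) (x : X), |T.indicator (1 : X → ℝ) x| ≤ 1 := by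
    intro T x
    rcases Set.indicator_eq_zero_or_self T (1 : X → ℝ) x with h | h <;> simp [h]
  have hind_int : ∀ (T : Set X), MeasurableSet T →
      Integrable (fun x => (Q.rnDeriv μ x).toReal * T.indicator 1 x) μ := by
    intro T hT
    refine hq_int.mono' ((hqm.mul (measurable_one.indicator hT)).aestronglyMeasurable) ?_
    filter_upwards with x
    rw [Real.norm_eq_abs, abs_mul, abs_of_nonneg ENNReal.toReal_nonneg]
    calc (Q.rnDeriv μ x).toReal * |T.indicator (1 : X → ℝ) x|
        ≤ (Q.rnDeriv μ x).toReal * 1 :=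
          mul_le_mul_of_nonneg_left (habs_ind T x) ENNReal.toReal_nonneg
      _ = (Q.rnDeriv μ x).toReal := mul_one _
  have hindp_int : ∀ (T : Set X), MeasurableSet T →
      Integrable (fun x => (P.rnDeriv μ x).toReal * T.indicator 1 x) μ := by
    intro T hT
    refine hp_int.mono' ((hpm.mul (measurable_one.indicator hT)).aestronglyMeasurable) ?_
    filter_upwards with x
    rw [Real.norm_eq_abs, abs_mul, abs_of_nonneg ENNReal.toReal_nonneg]
    calc (P.rnDeriv μ x).toReal * |T.indicator (1 : X → ℝ) x|
        ≤ (P.rnDeriv μ x).toReal * 1 :=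
          mul_le_mul_of_nonneg_left (habs_ind T x) ENNReal.toReal_nonneg
      _ = (P.rnDeriv μ x).toReal := mul_one _
  have hq1φ_int : Integrable (fun x => (Q.rnDeriv μ x).toReal * (1 - φ x)) μ := by
    refine hq_int.mono' ((hqm.mul (measurable_const.sub hφm)).aestronglyMeasurable) ?_
    filter_upwards with x
    rw [Real.norm_eq_abs, abs_mul, abs_of_nonneg ENNReal.toReal_nonneg,
      abs_of_nonneg (by linarith [(hφ01 x).2] : (0:ℝ) ≤ 1 - φ x)]
    nlinarith [(hφ01 x).1, ENNReal.toReal_nonneg (a := Q.rnDeriv μ x)]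
  have hpφ_int : Integrable (fun x => (P.rnDeriv μ x).toReal * φ x) μ := by
    refine hp_int.mono' ((hpm.mul hφm).aestronglyMeasurable) ?_
    filter_upwards with x
    rw [Real.norm_eq_abs, abs_mul, abs_of_nonneg ENNReal.toReal_nonneg,
      abs_of_nonneg (hφ01 x).1]
    nlinarith [(hφ01 x).2, ENNReal.toReal_nonneg (a := P.rnDeriv μ x)]
  -- conversion lemmas
  have conv_q : ∀ g : X → ℝ, ∫ x, (Q.rnDeriv μ x).toReal * g x ∂μ = ∫ x, g x ∂Q := by
    intro g
    have := integral_rnDeriv_smul (f := g) hQμ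
    simpa [smul_eq_mul] using this
  have conv_p : ∀ g : X → ℝ, ∫ x, (P.rnDeriv μ x).toReal * g x ∂μ = ∫ x, g x ∂P := by
    intro g
    have := integral_rnDeriv_smul (f := g) hPμ
    simpa [smul_eq_mul] using this
  rcases eq_or_lt_of_le hα₀.1 with hz | hpos
  · -- α₀ = 0 : use λ = ∞
    subst hz
    obtain ⟨S, hS𝒮, hae⟩ := hatt ⊤
    have hSm : MeasurableSet S := hmeas S hS𝒮
    refine ⟨S, hS𝒮, ?_⟩
    have hφint : Integrable φ P := by
      refine (integrable_const (1:ℝ)).mono' hφm.aestronglyMeasurable ?_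
      filter_upwards with x
      rw [Real.norm_eq_abs, abs_of_nonneg (hφ01 x).1]
      exact (hφ01 x).2
    have hint0 : ∫ x, φ x ∂P = 0 :=
      le_antisymm hφP (integral_nonneg fun x => (hφ01 x).1)
    have hae0 : φ =ᵐ[P] 0 :=
      (integral_eq_zero_iff_of_nonneg (fun x => (hφ01 x).1) hφint).mp hint0
    have hA : MeasurableSet {x | φ x ≠ 0} := (hφm (measurableSet_singleton 0)).compl
    have hPA : P {x | φ x ≠ 0} = 0 := by
      have := hae0
      rw [Filter.EventuallyEq, ae_iff] at this
      simpa using this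
    have hli : ∫⁻ x in {x | φ x ≠ 0}, P.rnDeriv μ x ∂μ = 0 := by
      rw [Measure.setLIntegral_rnDeriv hPμ]
      exact hPA
    have hres : ∀ᵐ x ∂μ.restrict {x | φ x ≠ 0}, P.rnDeriv μ x = 0 := by
      have := (lintegral_eq_zero_iff (Measure.measurable_rnDeriv P μ)).mp hli
      filter_upwards [this] with x hx using hx
    have hp0 : ∀ᵐ x ∂μ, x ∈ {x | φ x ≠ 0} → P.rnDeriv μ x = 0 :=
      (ae_restrict_iff' hA).mp hres
    have hPS : P S = 0 := by
      rw [← Measure.setLIntegral_rnDeriv hPμ S]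
      rw [setLIntegral_congr_fun_ae hSm (g := fun _ => 0) ?_]
      · simp
      · filter_upwards [hae] with x hx hxS
        rcases hx.mp hxS with ⟨_, h⟩ | ⟨h, _⟩
        · exact h
        · exact absurd rfl h
    have key : (Q Sᶜ).toReal ≤ ∫ x, (1 - φ x) ∂Q := by
      rw [← measureReal_def, ← integral_indicator_one (μ := Q) hSm.compl, ← conv_q (fun x => Sᶜ.indicator 1 x),
        ← conv_q (fun x => 1 - φ x)]
      refine integral_mono_ae (hind_int Sᶜ hSm.compl) hq1φ_int ?_
      filter_upwards [hae, hp0] with x hx hx2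
      by_cases hxS : x ∈ Sᶜ
      · have hφ0 : φ x = 0 := by
          by_contra hne
          exact hxS (hx.mpr (Or.inl ⟨rfl, hx2 hne⟩))
        simp [Set.indicator_of_mem hxS, hφ0]
      · rw [Set.indicator_of_notMem hxS, mul_zero]
        exact mul_nonneg ENNReal.toReal_nonneg (by linarith [(hφ01 x).2])
    rw [hPS]
    simp only [ENNReal.toReal_zero]
    linarith
  · -- 0 < α₀ : use finite λ from the supporting line
    obtain ⟨lam, hlam0, hsupp⟩ := exists_support_slope hconv hanti hpos hα₀.2
    obtain ⟨S, hS𝒮, hae⟩ := hatt (ENNReal.ofReal lam)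
    have hSm : MeasurableSet S := hmeas S hS𝒮
    refine ⟨S, hS𝒮, ?_⟩
    have key : ∫ x, ((Q.rnDeriv μ x).toReal * Sᶜ.indicator 1 x
          + lam * ((P.rnDeriv μ x).toReal * S.indicator 1 x)) ∂μ
        ≤ ∫ x, ((Q.rnDeriv μ x).toReal * (1 - φ x)
          + lam * ((P.rnDeriv μ x).toReal * φ x)) ∂μ := by
      refine integral_mono_ae
        ((hind_int Sᶜ hSm.compl).add ((hindp_int S hSm).const_mul lam))
        (hq1φ_int.add (hpφ_int.const_mul lam)) ?_
      filter_upwards [hae, Measure.rnDeriv_lt_top P μ, Measure.rnDeriv_lt_top Q μ]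
        with x hx hpx hqx
      have h01 := hφ01 x
      by_cases hxS : x ∈ S
      · rcases hx.mp hxS with ⟨h, _⟩ | ⟨_, h⟩
        · exact absurd h ENNReal.ofReal_ne_top
        · have h1 : lam * (P.rnDeriv μ x).toReal ≤ (Q.rnDeriv μ x).toReal := by
            have := ENNReal.toReal_mono hqx.ne h.le
            rwa [ENNReal.toReal_mul, ENNReal.toReal_ofReal hlam0] at this
          rw [Set.indicator_of_notMem (Set.notMem_compl_iff.mpr hxS),
            Set.indicator_of_mem hxS, Pi.one_apply]
          nlinarith [mul_le_mul_of_nonneg_right h1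
            (show (0:ℝ) ≤ 1 - φ x by linarith [h01.2])]
      · have hle : Q.rnDeriv μ x ≤ ENNReal.ofReal lam * P.rnDeriv μ x := by
          rcases le_or_gt (Q.rnDeriv μ x) (ENNReal.ofReal lam * P.rnDeriv μ x) with h | h
          · exact h
          · exact absurd (hx.mpr (Or.inr ⟨ENNReal.ofReal_ne_top, h⟩)) hxS
        have h2 : (Q.rnDeriv μ x).toReal ≤ lam * (P.rnDeriv μ x).toReal := by
          have := ENNReal.toReal_mono
            (ENNReal.mul_ne_top ENNReal.ofReal_ne_top hpx.ne) hle
          rwa [ENNReal.toReal_mul, ENNReal.toReal_ofReal hlam0] at this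
        rw [Set.indicator_of_mem (show x ∈ Sᶜ from hxS),
          Set.indicator_of_notMem hxS, Pi.one_apply]
        nlinarith [mul_le_mul_of_nonneg_right h2 h01.1]
    rw [integral_add (hind_int Sᶜ hSm.compl) ((hindp_int S hSm).const_mul lam),
      integral_add hq1φ_int (hpφ_int.const_mul lam),
      integral_const_mul, integral_const_mul,
      conv_q, conv_p, conv_q, conv_p,
      integral_indicator_one (μ := Q) hSm.compl,
      integral_indicator_one (μ := P) hSm, measureReal_def, measureReal_def] at key
    have hPS01 : (P S).toReal ∈ Icc (0:ℝ) 1 := by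
      constructor
      · exact ENNReal.toReal_nonneg
      · have h1 : P S ≤ 1 := prob_le_one
        simpa using ENNReal.toReal_mono (by norm_num) h1
    have hsup := hsupp _ hPS01
    have hP' : lam * (∫ x, φ x ∂P) ≤ lam * α₀ := mul_le_mul_of_nonneg_left hφP hlam0
    nlinarith
end

section
/- If (P,Q) is S-attainable for a class S of measurable sets containing ∅ and X, then for all α∈[0,1], T(P,Q)(α) = inf{ β : (α,β) ∈ closed convex hull of {(P(S), Q(Sᶜ)) : S∈S} }. -/
open MeasureTheory Set Filter
open scoped ENNReal Topology
set_option linter.unusedSectionVars false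
set_option maxHeartbeats 1000000

namespace Stmt6Aux
variable {X : Type*} [MeasurableSpace X]

noncomputable def mu2 (P Q : Measure X) : Measure X := (2:ℝ≥0∞)⁻¹ • (P + Q)

variable (P Q : Measure X) [IsProbabilityMeasure P] [IsProbabilityMeasure Q]

lemma mu2_prob : IsProbabilityMeasure (mu2 P Q) := by
  constructor
  simp [mu2, Measure.add_apply]
  exact ENNReal.inv_two_add_inv_two

lemma absCont_P : P ≪ mu2 P Q := by
  intro s hs
  simp only [mu2, Measure.smul_apply, smul_eq_mul, Measure.add_apply] at hs
  have h2 : P s + Q s = 0 := by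
    rcases mul_eq_zero.mp hs with h | h
    · norm_num at h
    · exact h
  exact (add_eq_zero.mp h2).1

lemma absCont_Q : Q ≪ mu2 P Q := by
  intro s hs
  simp only [mu2, Measure.smul_apply, smul_eq_mul, Measure.add_apply] at hs
  have h2 : P s + Q s = 0 := by
    rcases mul_eq_zero.mp hs with h | h
    · norm_num at h
    · exact h
  exact (add_eq_zero.mp h2).2

lemma withDensity_p : (mu2 P Q).withDensity (P.rnDeriv (mu2 P Q)) = P := by
  haveI := mu2_prob P Q
  exact Measure.withDensity_rnDeriv_eq P (mu2 P Q) (absCont_P P Q)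

lemma withDensity_q : (mu2 P Q).withDensity (Q.rnDeriv (mu2 P Q)) = Q := by
  haveI := mu2_prob P Q
  exact Measure.withDensity_rnDeriv_eq Q (mu2 P Q) (absCont_Q P Q)

end Stmt6Aux
namespace Stmt6Aux
variable {X : Type*} [MeasurableSpace X]

/-- a test function -/
def IsTest (φ : X → ℝ) : Prop := Measurable φ ∧ ∀ x, φ x ∈ Icc (0:ℝ) 1

variable {P Q : Measure X} [IsProbabilityMeasure P] [IsProbabilityMeasure Q]

lemma IsTest.integrable {φ : X → ℝ} (hφ : IsTest φ) (ν : Measure X) [IsProbabilityMeasure ν] :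
    Integrable φ ν := by
  refine Integrable.mono' (integrable_const 1) hφ.1.aestronglyMeasurable ?_
  filter_upwards with x
  rw [Real.norm_eq_abs, abs_le]
  exact ⟨le_trans (by norm_num) (hφ.2 x).1, (hφ.2 x).2⟩

lemma IsTest.lintegral_eq {φ : X → ℝ} (hφ : IsTest φ) (ν : Measure X) [IsProbabilityMeasure ν] :
    ∫ x, φ x ∂ν = (∫⁻ x, ENNReal.ofReal (φ x) ∂ν).toReal := by
  rw [← ofReal_integral_eq_lintegral_ofReal (hφ.integrable ν)
    (Filter.Eventually.of_forall fun x => (hφ.2 x).1),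
    ENNReal.toReal_ofReal (integral_nonneg fun x => (hφ.2 x).1)]

lemma IsTest.lintegral_lt_top {φ : X → ℝ} (hφ : IsTest φ) (ν : Measure X)
    [IsProbabilityMeasure ν] : ∫⁻ x, ENNReal.ofReal (φ x) ∂ν < ⊤ := by
  refine lt_of_le_of_lt (lintegral_mono fun x => ?_) (by simp : (∫⁻ _, 1 ∂ν) < ⊤)
  exact ENNReal.ofReal_le_one.mpr (hφ.2 x).2

lemma IsTest.int_one_sub {φ : X → ℝ} (hφ : IsTest φ) :
    ∫ x, (1 - φ x) ∂Q = 1 - ∫ x, φ x ∂Q := by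
  rw [integral_sub (integrable_const 1) (hφ.integrable Q), integral_const]
  simp

lemma toReal_compl (S : Set X) (hS : MeasurableSet S) :
    (Q Sᶜ).toReal = 1 - (Q S).toReal := by
  rw [measure_compl hS (measure_ne_top Q S), measure_univ,
    ENNReal.toReal_sub_of_le prob_le_one (by simp)]
  simp

/-- Core Neyman–Pearson inequality, ENNReal version. -/
lemma NP_lintegral (lam : ℝ≥0∞) (hlam : lam ≠ ⊤) (S : Set X) (hS : MeasurableSet S)
    (φ' : X → ℝ≥0∞) (hφm : Measurable φ') (hφ1 : ∀ x, φ' x ≤ 1)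
    (hae : ∀ᵐ x ∂(mu2 P Q), (x ∈ S → lam * P.rnDeriv (mu2 P Q) x ≤ Q.rnDeriv (mu2 P Q) x)
      ∧ (x ∉ S → Q.rnDeriv (mu2 P Q) x ≤ lam * P.rnDeriv (mu2 P Q) x)) :
    ∫⁻ x, φ' x ∂Q + lam * P S ≤ Q S + lam * ∫⁻ x, φ' x ∂P := by
  set μ := mu2 P Q with hμ
  haveI := mu2_prob P Q
  set p := P.rnDeriv μ with hp
  set q := Q.rnDeriv μ with hq
  have hpm : Measurable p := Measure.measurable_rnDeriv P μ
  have hqm : Measurable q := Measure.measurable_rnDeriv Q μ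
  have hPS : P S = ∫⁻ x in S, p x ∂μ := by
    rw [← withDensity_p P Q, withDensity_apply _ hS]
  have hQS : Q S = ∫⁻ x in S, q x ∂μ := by
    rw [← withDensity_q P Q, withDensity_apply _ hS]
  have hφP : ∫⁻ x, φ' x ∂P = ∫⁻ x, p x * φ' x ∂μ := by
    rw [← withDensity_p P Q, lintegral_withDensity_eq_lintegral_mul _ hpm hφm]; rfl
  have hφQ : ∫⁻ x, φ' x ∂Q = ∫⁻ x, q x * φ' x ∂μ := by
    rw [← withDensity_q P Q, lintegral_withDensity_eq_lintegral_mul _ hqm hφm]; rfl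
  rw [hPS, hQS, hφP, hφQ, ← lintegral_indicator hS p, ← lintegral_indicator hS q,
    ← lintegral_const_mul' _ _ hlam, ← lintegral_const_mul' _ _ hlam,
    ← lintegral_add_left (f := fun x => q x * φ' x) (hqm.mul hφm), ← lintegral_add_left ((hqm.indicator hS))]
  refine lintegral_mono_ae (hae.mono fun x hx' => ?_)
  by_cases hx : x ∈ S
  · have h1 : lam * p x ≤ q x := hx'.1 hx
    simp only [Set.indicator_of_mem hx]
    calc q x * φ' x + lam * p x
        = q x * φ' x + (lam * p x * φ' x + lam * p x * (1 - φ' x)) := by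
          rw [← mul_add, add_tsub_cancel_of_le (hφ1 x), mul_one]
      _ ≤ q x * φ' x + (lam * p x * φ' x + q x * (1 - φ' x)) := by gcongr
      _ = (q x * φ' x + q x * (1 - φ' x)) + lam * (p x * φ' x) := by ring
      _ = q x + lam * (p x * φ' x) := by
          rw [← mul_add, add_tsub_cancel_of_le (hφ1 x), mul_one]
  · have h1 : q x ≤ lam * p x := hx'.2 hx
    simp only [Set.indicator_of_notMem hx]
    calc q x * φ' x + lam * 0
        = q x * φ' x := by rw [mul_zero, add_zero]
      _ ≤ lam * p x * φ' x := by gcongr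
      _ = lam * (p x * φ' x) := by ring
      _ ≤ 0 + lam * (p x * φ' x) := by rw [zero_add]

/-- Core Neyman–Pearson inequality, real version. -/
lemma NP_real (lam : ℝ) (hlam : 0 ≤ lam) {S : Set X} (hS : MeasurableSet S)
    (hae : ∀ᵐ x ∂(mu2 P Q),
      (x ∈ S → ENNReal.ofReal lam * P.rnDeriv (mu2 P Q) x ≤ Q.rnDeriv (mu2 P Q) x)
      ∧ (x ∉ S → Q.rnDeriv (mu2 P Q) x ≤ ENNReal.ofReal lam * P.rnDeriv (mu2 P Q) x))
    {φ : X → ℝ} (hφ : IsTest φ) {α : ℝ} (hα : ∫ x, φ x ∂P ≤ α) :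
    (Q Sᶜ).toReal + lam * ((P S).toReal - α) ≤ ∫ x, (1 - φ x) ∂Q := by
  have hlam' : (ENNReal.ofReal lam) ≠ ⊤ := ENNReal.ofReal_ne_top
  have hφ'm : Measurable (fun x => ENNReal.ofReal (φ x)) :=
    ENNReal.measurable_ofReal.comp hφ.1
  have hφ'1 : ∀ x, ENNReal.ofReal (φ x) ≤ 1 := fun x => ENNReal.ofReal_le_one.mpr (hφ.2 x).2
  have E := NP_lintegral (P := P) (Q := Q) (ENNReal.ofReal lam) hlam' S hS _ hφ'm hφ'1 hae
  -- finiteness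
  have f1 : ∫⁻ x, ENNReal.ofReal (φ x) ∂Q ≠ ⊤ := (hφ.lintegral_lt_top Q).ne
  have f2 : ∫⁻ x, ENNReal.ofReal (φ x) ∂P ≠ ⊤ := (hφ.lintegral_lt_top P).ne
  have f3 : P S ≠ ⊤ := measure_ne_top P S
  have f4 : Q S ≠ ⊤ := measure_ne_top Q S
  have hRHSfin : Q S + ENNReal.ofReal lam * ∫⁻ x, ENNReal.ofReal (φ x) ∂P ≠ ⊤ := by
    exact ENNReal.add_ne_top.mpr ⟨f4, ENNReal.mul_ne_top hlam' f2⟩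
  have R := ENNReal.toReal_mono hRHSfin E
  rw [ENNReal.toReal_add f1 (ENNReal.mul_ne_top hlam' f3),
    ENNReal.toReal_add f4 (ENNReal.mul_ne_top hlam' f2),
    ENNReal.toReal_mul, ENNReal.toReal_mul, ENNReal.toReal_ofReal hlam] at R
  rw [← hφ.lintegral_eq Q, ← hφ.lintegral_eq P] at R
  rw [hφ.int_one_sub, toReal_compl S hS]
  have hmul : lam * ∫ x, φ x ∂P ≤ lam * α := mul_le_mul_of_nonneg_left hα hlam
  nlinarith [R, hmul]


/-- the strict likelihood-ratio set -/
def lamSet (P Q : Measure X) (lam : ℝ≥0∞) : Set X :=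
  {x | lam * P.rnDeriv (mu2 P Q) x < Q.rnDeriv (mu2 P Q) x}

lemma lamSet_measurable (lam : ℝ≥0∞) : MeasurableSet (lamSet P Q lam) :=
  measurableSet_lt (measurable_const.mul (Measure.measurable_rnDeriv P _))
    (Measure.measurable_rnDeriv Q _)

lemma lamSet_antitone : Antitone (lamSet P Q) := by
  intro a b hab x hx
  exact lt_of_le_of_lt (mul_le_mul_left hab _) hx

lemma measure_eq_of_ae_iff {ν : Measure X} (hν : ν ≪ mu2 P Q) {S T : Set X}
    (h : ∀ᵐ x ∂(mu2 P Q), x ∈ S ↔ x ∈ T) : ν S = ν T ∧ ν Sᶜ = ν Tᶜ := by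
  have h' : ∀ᵐ x ∂ν, x ∈ S ↔ x ∈ T := hν.ae_le h
  constructor
  · exact measure_congr (Filter.eventuallyEq_set.mpr h')
  · refine measure_congr (Filter.eventuallyEq_set.mpr ?_)
    filter_upwards [h'] with x hx
    simpa using hx.not

lemma exists_S_of_att {𝒮 : Set (Set X)} (hatt : SAttainable 𝒮 P Q) (lam : ℝ≥0∞)
    (hlam : lam ≠ ⊤) :
    ∃ S ∈ 𝒮, P S = P (lamSet P Q lam) ∧ Q Sᶜ = Q (lamSet P Q lam)ᶜ := by
  obtain ⟨S, hS𝒮, hae⟩ := hatt lam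
  refine ⟨S, hS𝒮, ?_⟩
  have hae' : ∀ᵐ x ∂(mu2 P Q), x ∈ S ↔ x ∈ lamSet P Q lam := by
    refine hae.mono fun x hx => ?_
    rw [hx]
    simp only [lamSet, mem_setOf_eq, hlam, false_and, false_or, ne_eq, not_false_iff, true_and]
    rfl
  exact ⟨(measure_eq_of_ae_iff (absCont_P P Q) hae').1,
    (measure_eq_of_ae_iff (absCont_Q P Q) hae').2⟩

/-- the `lam = ⊤` set -/
def topSet (P Q : Measure X) : Set X := {x | P.rnDeriv (mu2 P Q) x = 0}

lemma exists_S_top {𝒮 : Set (Set X)} (hatt : SAttainable 𝒮 P Q) :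
    ∃ S ∈ 𝒮, P S = P (topSet P Q) ∧ Q Sᶜ = Q (topSet P Q)ᶜ := by
  obtain ⟨S, hS𝒮, hae⟩ := hatt ⊤
  refine ⟨S, hS𝒮, ?_⟩
  have hae' : ∀ᵐ x ∂(mu2 P Q), x ∈ S ↔ x ∈ topSet P Q := by
    refine hae.mono fun x hx => ?_
    rw [hx]
    simp only [topSet, mem_setOf_eq, lt_irrefl, and_false, or_false, ne_eq,
      not_true_eq_false, false_and, true_and]
    rfl
  exact ⟨(measure_eq_of_ae_iff (absCont_P P Q) hae').1,
    (measure_eq_of_ae_iff (absCont_Q P Q) hae').2⟩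

lemma P_topSet : P (topSet P Q) = 0 := by
  have h : MeasurableSet (topSet P Q) :=
    (Measure.measurable_rnDeriv P (mu2 P Q)) (measurableSet_singleton 0)
  have h2 : ((mu2 P Q).withDensity (P.rnDeriv (mu2 P Q))) (topSet P Q)
      = ∫⁻ x in topSet P Q, P.rnDeriv (mu2 P Q) x ∂(mu2 P Q) := withDensity_apply _ h
  rw [withDensity_p] at h2
  rw [h2, setLIntegral_congr_fun (g := fun _ => 0) h (by intro x hx; exact hx)]
  simp

lemma Q_qzero : Q {x | Q.rnDeriv (mu2 P Q) x = 0} = 0 := by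
  have h : MeasurableSet {x | Q.rnDeriv (mu2 P Q) x = 0} :=
    (Measure.measurable_rnDeriv Q (mu2 P Q)) (measurableSet_singleton 0)
  have h2 : ((mu2 P Q).withDensity (Q.rnDeriv (mu2 P Q))) {x | Q.rnDeriv (mu2 P Q) x = 0}
      = ∫⁻ x in {x | Q.rnDeriv (mu2 P Q) x = 0}, Q.rnDeriv (mu2 P Q) x ∂(mu2 P Q) :=
    withDensity_apply _ h
  rw [withDensity_q] at h2
  rw [h2, setLIntegral_congr_fun (g := fun _ => 0) h (by intro x hx; exact hx)]
  simp

lemma mu2_p_top : (mu2 P Q) {x | P.rnDeriv (mu2 P Q) x = ⊤} = 0 := by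
  haveI := mu2_prob P Q
  have := Measure.rnDeriv_lt_top P (mu2 P Q)
  rw [← nonpos_iff_eq_zero]
  refine le_trans (measure_mono ?_) (le_of_eq (ae_iff.mp this))
  intro x hx
  simp only [mem_setOf_eq] at hx ⊢
  simp [hx]

lemma mu2_q_top : (mu2 P Q) {x | Q.rnDeriv (mu2 P Q) x = ⊤} = 0 := by
  haveI := mu2_prob P Q
  have := Measure.rnDeriv_lt_top Q (mu2 P Q)
  rw [← nonpos_iff_eq_zero]
  refine le_trans (measure_mono ?_) (le_of_eq (ae_iff.mp this))
  intro x hx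
  simp only [mem_setOf_eq] at hx ⊢
  simp [hx]



section Hull
variable (𝒮 : Set (Set X))

/-- the set of achievable points -/
def Kpts (P Q : Measure X) (𝒮 : Set (Set X)) : Set (ℝ × ℝ) :=
  {z : ℝ × ℝ | ∃ S ∈ 𝒮, z = ((P S).toReal, (Q Sᶜ).toReal)}

lemma Kpts_subset_Icc : Kpts P Q 𝒮 ⊆ Icc ((0:ℝ),(0:ℝ)) ((1:ℝ),(1:ℝ)) := by
  rintro z ⟨S, hS, rfl⟩
  constructor
  · exact ⟨ENNReal.toReal_nonneg, ENNReal.toReal_nonneg⟩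
  · constructor
    · simpa using ENNReal.toReal_mono ENNReal.one_ne_top (prob_le_one (μ := P) (s := S))
    · simpa using ENNReal.toReal_mono ENNReal.one_ne_top (prob_le_one (μ := Q) (s := Sᶜ))

lemma closure_hull_subset_Icc :
    closure (convexHull ℝ (Kpts P Q 𝒮)) ⊆ Icc ((0:ℝ),(0:ℝ)) ((1:ℝ),(1:ℝ)) :=
  closure_minimal (convexHull_min (Kpts_subset_Icc 𝒮) (convex_Icc _ _)) isClosed_Icc

/-- every point of the convex hull of `Kpts` is realized by a test -/
lemma hull_realized (hmeas : ∀ A ∈ 𝒮, MeasurableSet A) {z : ℝ × ℝ}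
    (hz : z ∈ convexHull ℝ (Kpts P Q 𝒮)) :
    ∃ φ : X → ℝ, IsTest φ ∧ (∫ x, φ x ∂P) = z.1 ∧ (∫ x, (1 - φ x) ∂Q) = z.2 := by
  rw [convexHull_eq] at hz
  obtain ⟨ι, t, w, zf, hw0, hw1, hzs, hcm⟩ := hz
  classical
  -- choose sets
  have hch : ∀ i ∈ t, ∃ S ∈ 𝒮, zf i = ((P S).toReal, (Q Sᶜ).toReal) := fun i hi => hzs i hi
  choose! S hS𝒮 hSz using hch
  have hSm : ∀ i ∈ t, MeasurableSet (S i) := fun i hi => hmeas _ (hS𝒮 i hi)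
  set φ : X → ℝ := fun x => ∑ i ∈ t, w i * (S i).indicator (fun _ => (1:ℝ)) x with hφdef
  have hφm : Measurable φ := by
    apply Finset.measurable_sum
    intro i hi
    exact (measurable_const.indicator (hSm i hi)).const_mul _
  have hind01 : ∀ i x, (0:ℝ) ≤ (S i).indicator (fun _ => (1:ℝ)) x ∧
      (S i).indicator (fun _ => (1:ℝ)) x ≤ 1 := by
    intro i x
    by_cases h : x ∈ S i <;> simp [h]
  have hφ01 : ∀ x, φ x ∈ Icc (0:ℝ) 1 := by
    intro x
    constructor
    · exact Finset.sum_nonneg fun i hi => mul_nonneg (hw0 i hi) (hind01 i x).1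
    · calc ∑ i ∈ t, w i * (S i).indicator (fun _ => (1:ℝ)) x
          ≤ ∑ i ∈ t, w i * 1 := by
            refine Finset.sum_le_sum fun i hi => ?_
            exact mul_le_mul_of_nonneg_left (hind01 i x).2 (hw0 i hi)
      _ = 1 := by simp [hw1]
  have hφtest : IsTest φ := ⟨hφm, hφ01⟩
  have hint : ∀ (ν : Measure X), IsProbabilityMeasure ν →
      ∫ x, φ x ∂ν = ∑ i ∈ t, w i * (ν (S i)).toReal := by
    intro ν hν
    rw [hφdef]
    rw [integral_finset_sum t (fun i hi =>
      (((integrable_const (1:ℝ)).indicator (hSm i hi)).const_mul _))]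
    refine Finset.sum_congr rfl fun i hi => ?_
    rw [integral_const_mul, integral_indicator_const (1:ℝ) (hSm i hi)]
    simp [measureReal_def]
  have hsum : z = ∑ i ∈ t, w i • zf i := by
    rw [← hcm, Finset.centerMass_eq_of_sum_1 t zf hw1]
  refine ⟨φ, hφtest, ?_, ?_⟩
  · rw [hint P inferInstance, hsum, Prod.fst_sum]
    refine Finset.sum_congr rfl fun i hi => ?_
    rw [hSz i hi, Prod.smul_fst]
    simp
  · rw [hφtest.int_one_sub, hint Q inferInstance, hsum, Prod.snd_sum]
    rw [← hw1, ← Finset.sum_sub_distrib]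
    refine Finset.sum_congr rfl fun i hi => ?_
    rw [hSz i hi, Prod.smul_snd]
    have := toReal_compl (Q := Q) (S i) (hSm i hi)
    simp only [smul_eq_mul]
    rw [this]
    ring

end Hull

lemma tradeoff_le_of_test {φ : X → ℝ} (hφ : IsTest φ) {α : ℝ} (hα : ∫ x, φ x ∂P ≤ α) :
    tradeoff P Q α ≤ ∫ x, (1 - φ x) ∂Q := by
  apply csInf_le
  · refine ⟨0, fun b hb => ?_⟩
    obtain ⟨ψ, hψm, hψ01, -, rfl⟩ := hb
    refine integral_nonneg fun x => ?_
    simp only [Pi.zero_apply]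
    linarith [(hψ01 x).2]
  · exact ⟨φ, hφ.1, hφ.2, hα, rfl⟩


lemma hull_subset_Icc (𝒮 : Set (Set X)) :
    convexHull ℝ (Kpts P Q 𝒮) ⊆ Icc ((0:ℝ),(0:ℝ)) ((1:ℝ),(1:ℝ)) :=
  convexHull_min (Kpts_subset_Icc 𝒮) (convex_Icc _ _)

/-- Direction I: the tradeoff value is at most anything in the closed convex hull. -/
lemma dirI (𝒮 : Set (Set X)) (hmeas : ∀ A ∈ 𝒮, MeasurableSet A) {α b : ℝ}
    (hα : α ∈ Icc (0:ℝ) 1) (hb : (α, b) ∈ closure (convexHull ℝ (Kpts P Q 𝒮))) :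
    tradeoff P Q α ≤ b := by
  apply le_of_forall_pos_le_add
  intro ε hε
  -- a helper to extract approximating tests
  have happrox : ∀ δ > (0:ℝ), ∃ φ : X → ℝ, IsTest φ ∧
      |α - ∫ x, φ x ∂P| < δ ∧ |b - ∫ x, (1 - φ x) ∂Q| < δ ∧
      (∫ x, φ x ∂P) ∈ Icc (0:ℝ) 1 ∧ (∫ x, (1 - φ x) ∂Q) ∈ Icc (0:ℝ) 1 := by
    intro δ hδ
    obtain ⟨y, hy, hyd⟩ := Metric.mem_closure_iff.mp hb δ hδ
    obtain ⟨φ, hφ, hφ1, hφ2⟩ := hull_realized 𝒮 hmeas hy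
    have hyIcc := hull_subset_Icc 𝒮 hy
    rw [Prod.dist_eq] at hyd
    have h1 : dist α y.1 < δ := lt_of_le_of_lt (le_max_left _ _) hyd
    have h2 : dist b y.2 < δ := lt_of_le_of_lt (le_max_right _ _) hyd
    rw [Real.dist_eq] at h1 h2
    exact ⟨φ, hφ, by rwa [hφ1], by rwa [hφ2],
      by rw [hφ1]; exact ⟨hyIcc.1.1, hyIcc.2.1⟩, by rw [hφ2]; exact ⟨hyIcc.1.2, hyIcc.2.2⟩⟩
  rcases eq_or_lt_of_le hα.1 with hα0 | hα0
  · -- case α = 0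
    subst hα0
    -- the Q-null set of infinite density
    have hQtop : Q {x | Q.rnDeriv (mu2 P Q) x = ⊤} = 0 := absCont_Q P Q (mu2_q_top (P := P) (Q := Q))
    set p := P.rnDeriv (mu2 P Q) with hp
    set q := Q.rnDeriv (mu2 P Q) with hq
    set A : ℕ → Set X := fun n => (lamSet P Q (ENNReal.ofReal (n:ℝ)))ᶜ with hA
    have hAmono : Monotone A := by
      intro n m hnm
      exact compl_subset_compl.mpr (lamSet_antitone (P := P) (Q := Q)
        (ENNReal.ofReal_le_ofReal (by exact_mod_cast hnm)))
    have hsub : (topSet P Q)ᶜ ⊆ (⋃ n, A n) ∪ {x | q x = ⊤} := by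
      intro x hx
      simp only [topSet, mem_compl_iff, mem_setOf_eq] at hx
      by_cases hqx : q x = ⊤
      · exact Or.inr hqx
      refine Or.inl ?_
      by_cases hpx : p x = ⊤
      · refine mem_iUnion.mpr ⟨1, ?_⟩
        simp only [A, lamSet, mem_compl_iff, mem_setOf_eq, not_lt, Nat.cast_one,
          ENNReal.ofReal_one, one_mul]
        rw [← hp, hpx]
        exact le_top
      · obtain ⟨n, hn⟩ := ENNReal.exists_nat_gt (show q x / p x ≠ ⊤ from
          (ENNReal.div_lt_top hqx hx).ne)
        refine mem_iUnion.mpr ⟨n, ?_⟩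
        simp only [A, lamSet, mem_compl_iff, mem_setOf_eq, not_lt]
        rw [ENNReal.ofReal_natCast]
        exact (ENNReal.div_le_iff hx hpx).mp hn.le
    have hQsub : Q (topSet P Q)ᶜ ≤ Q (⋃ n, A n) := by
      calc Q (topSet P Q)ᶜ ≤ Q ((⋃ n, A n) ∪ {x | q x = ⊤}) := measure_mono hsub
        _ ≤ Q (⋃ n, A n) + Q {x | q x = ⊤} := measure_union_le _ _
        _ = Q (⋃ n, A n) := by rw [hQtop, add_zero]
    set T : ℝ := (Q (topSet P Q)ᶜ).toReal with hT
    have htop_meas : MeasurableSet (topSet P Q) :=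
      (Measure.measurable_rnDeriv P (mu2 P Q)) (measurableSet_singleton 0)
    -- tradeoff at 0 is at most T
    have htr : tradeoff P Q 0 ≤ T := by
      have hφ0 : IsTest ((topSet P Q).indicator (fun _ => (1:ℝ))) := by
        refine ⟨measurable_const.indicator htop_meas, fun x => ?_⟩
        by_cases h : x ∈ topSet P Q <;> simp [h]
      have hint0 : ∫ x, (topSet P Q).indicator (fun _ => (1:ℝ)) x ∂P ≤ 0 := by
        rw [integral_indicator_const (1:ℝ) htop_meas, measureReal_def, P_topSet (P := P) (Q := Q)]
        simp
      have := tradeoff_le_of_test (Q := Q) hφ0 hint0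
      refine le_trans this (le_of_eq ?_)
      rw [hφ0.int_one_sub, integral_indicator_const (1:ℝ) htop_meas, hT,
        toReal_compl (Q := Q) _ htop_meas]
      simp [measureReal_def]
    -- find n with (Q (A n)).toReal close to the limit
    have htend : Tendsto (fun n => (Q (A n)).toReal) atTop (nhds ((Q (⋃ n, A n)).toReal)) := by
      exact (ENNReal.tendsto_toReal (measure_ne_top Q _)).comp
        (tendsto_measure_iUnion_atTop hAmono)
    have hTle : T - ε/4 < (Q (⋃ n, A n)).toReal := by
      have : T ≤ (Q (⋃ n, A n)).toReal :=
        ENNReal.toReal_mono (measure_ne_top Q _) hQsub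
      linarith
    obtain ⟨n, hn⟩ := (htend.eventually (eventually_gt_nhds hTle)).exists
    -- choose a test approximating (0, b)
    set δ : ℝ := min (ε/4) (ε/(4*(n+1))) with hδdef
    have hδpos : 0 < δ := lt_min (by linarith) (by positivity)
    obtain ⟨φ, hφ, hd1, hd2, hIcc1, hIcc2⟩ := happrox δ hδpos
    -- NP inequality with lam = n and S = lamSet
    have hNP := NP_real (P := P) (Q := Q) (n:ℝ) (Nat.cast_nonneg n)
      (lamSet_measurable (P := P) (Q := Q) (ENNReal.ofReal (n:ℝ)))
      (Filter.Eventually.of_forall fun x =>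
        ⟨fun hx => le_of_lt hx, fun hx => not_lt.mp hx⟩) hφ (le_refl (∫ x, φ x ∂P))
    -- assemble
    have h1 : |0 - ∫ x, φ x ∂P| < δ := hd1
    have h2 : |b - ∫ x, (1 - φ x) ∂Q| < δ := hd2
    rw [abs_sub_lt_iff] at h1 h2
    have hPS0 : (0:ℝ) ≤ (P (lamSet P Q (ENNReal.ofReal (n:ℝ)))).toReal := ENNReal.toReal_nonneg
    have hQA : (Q (A n)).toReal = (Q (lamSet P Q (ENNReal.ofReal (n:ℝ)))ᶜ).toReal := rfl
    have hnδ : (n:ℝ) * δ ≤ ε/4 := by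
      have : δ ≤ ε/(4*(n+1)) := min_le_right _ _
      have h3 : (n:ℝ) * δ ≤ (n:ℝ) * (ε/(4*(n+1))) :=
        mul_le_mul_of_nonneg_left this (Nat.cast_nonneg n)
      have h4 : (n:ℝ) * (ε/(4*(n+1))) ≤ ε/4 := by
        rw [mul_comm, div_mul_eq_mul_div, div_le_div_iff₀ (by positivity) (by norm_num)]
        nlinarith [Nat.cast_nonneg (α := ℝ) n, hε.le]
      linarith
    have hδε : δ ≤ ε/4 := min_le_left _ _
    -- T - ε/4 < Q(A n) ≤ y.2 + n * y.1 ≤ b + δ + n δ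
    have : T - ε/4 < (∫ x, (1 - φ x) ∂Q) + (n:ℝ) * ∫ x, φ x ∂P := by
      have hb1 : (Q (A n)).toReal ≤ (∫ x, (1 - φ x) ∂Q) + (n:ℝ) * ∫ x, φ x ∂P := by
        rw [hQA]
        nlinarith [hNP, hPS0, Nat.cast_nonneg (α := ℝ) n]
      linarith [hn]
    have hφP1 : ∫ x, φ x ∂P < δ := by linarith [h1.2]
    have hφP0 : 0 ≤ ∫ x, φ x ∂P := hIcc1.1
    have hmul : (n:ℝ) * ∫ x, φ x ∂P ≤ (n:ℝ) * δ :=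
      mul_le_mul_of_nonneg_left hφP1.le (Nat.cast_nonneg n)
    have hval : (∫ x, (1 - φ x) ∂Q) < b + δ := by linarith [h2.1]
    linarith [htr, hnδ, hδε]
  · -- case 0 < α
    set δ : ℝ := min (ε/2) (α*ε/2) with hδdef
    have hδpos : 0 < δ := lt_min (by linarith) (by positivity)
    obtain ⟨φ, hφ, hd1, hd2, hIcc1, hIcc2⟩ := happrox δ hδpos
    set a : ℝ := ∫ x, φ x ∂P with ha
    set v : ℝ := ∫ x, (1 - φ x) ∂Q with hv
    rw [abs_sub_lt_iff] at hd1 hd2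
    have hδε : δ ≤ ε/2 := min_le_left _ _
    have hδα : δ ≤ α*ε/2 := min_le_right _ _
    by_cases hcase : a ≤ α
    · have := tradeoff_le_of_test (Q := Q) hφ hcase
      linarith [hd2.1]
    · push_neg at hcase
      have ha0 : 0 < a := lt_trans hα0 hcase
      set φ' : X → ℝ := fun x => (α/a) * φ x with hφ'def
      have hca : 0 ≤ α/a := div_nonneg hα0.le ha0.le
      have hca1 : α/a ≤ 1 := (div_le_one ha0).mpr hcase.le
      have hφ' : IsTest φ' := by
        refine ⟨hφ.1.const_mul _, fun x => ⟨?_, ?_⟩⟩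
        · exact mul_nonneg hca (hφ.2 x).1
        · calc (α/a) * φ x ≤ (α/a) * 1 := mul_le_mul_of_nonneg_left (hφ.2 x).2 hca
            _ ≤ 1 := by rwa [mul_one]
      have hφ'P : ∫ x, φ' x ∂P = α := by
        rw [hφ'def]
        simp only
        rw [integral_const_mul, ← ha, div_mul_cancel₀]
        exact ha0.ne'
      have htr := tradeoff_le_of_test (Q := Q) hφ' (le_of_eq hφ'P)
      have hφ'Q : ∫ x, (1 - φ' x) ∂Q = 1 - (α/a) * (1 - v) := by
        rw [hφ'.int_one_sub, hφ'def]
        simp only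
        rw [integral_const_mul]
        have := hφ.int_one_sub (Q := Q)
        rw [← hv] at this
        have hQv : ∫ x, φ x ∂Q = 1 - v := by linarith
        rw [hQv]
      rw [hφ'Q] at htr
      -- bound 1 - (α/a)*(1-v) ≤ b + ε
      have key : 1 - α/a ≤ δ/α := by
        have h5 : (a - α)/a ≤ δ/α := by
          rw [div_le_div_iff₀ ha0 hα0]
          nlinarith [hd1.2, hα0, hcase, hδpos]
        calc 1 - α/a = (a - α)/a := by field_simp
          _ ≤ δ/α := h5
      have hv1 : v ≤ 1 := hIcc2.2
      have hv0 : 0 ≤ v := hIcc2.1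
      have h6 : (1 - α/a) * (1 - v) ≤ δ/α := by
        calc (1 - α/a) * (1 - v) ≤ (δ/α) * 1 := by
              apply mul_le_mul key (by linarith) (by linarith) (by positivity)
          _ = δ/α := mul_one _
      have h7 : δ/α ≤ ε/2 := by
        rw [div_le_iff₀ hα0]
        calc δ ≤ α*ε/2 := hδα
          _ = ε/2*α := by ring
      have h8 : 1 - (α/a) * (1 - v) = v + (1 - α/a)*(1-v) := by ring
      linarith [hd2.1]


lemma mem_closure_pts (𝒮 : Set (Set X)) {S : Set X} {E : ℕ → Set X}
    (hK : ∀ n, ∃ S' ∈ 𝒮, P S' = P (E n) ∧ Q S'ᶜ = Q (E n)ᶜ)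
    (hPt : Tendsto (fun n => P (E n)) atTop (nhds (P S)))
    (hQt : Tendsto (fun n => Q (E n)ᶜ) atTop (nhds (Q Sᶜ))) :
    ((P S).toReal, (Q Sᶜ).toReal) ∈ closure (convexHull ℝ (Kpts P Q 𝒮)) := by
  refine mem_closure_of_tendsto
    (f := fun n => ((P (E n)).toReal, (Q (E n)ᶜ).toReal)) (b := atTop) ?_ ?_
  · exact (((ENNReal.tendsto_toReal (measure_ne_top P S)).comp hPt).prodMk_nhds
      ((ENNReal.tendsto_toReal (measure_ne_top Q Sᶜ)).comp hQt))
  · refine Filter.Eventually.of_forall fun n => ?_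
    obtain ⟨S', hS', h1, h2⟩ := hK n
    exact subset_convexHull ℝ _ ⟨S', hS', by rw [h1, h2]⟩

/-- Direction II: any test is dominated by a point of the closed convex hull. -/
lemma dirII (𝒮 : Set (Set X)) (huniv : univ ∈ 𝒮) (hatt : SAttainable 𝒮 P Q)
    {α : ℝ} (hα : α ∈ Icc (0:ℝ) 1) {φ : X → ℝ} (hφ : IsTest φ)
    (hφα : ∫ x, φ x ∂P ≤ α) :
    ∃ b' : ℝ, (α, b') ∈ closure (convexHull ℝ (Kpts P Q 𝒮)) ∧
      b' ≤ ∫ x, (1 - φ x) ∂Q := by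
  haveI := mu2_prob P Q
  set C := closure (convexHull ℝ (Kpts P Q 𝒮)) with hC
  set b := ∫ x, (1 - φ x) ∂Q with hb
  have hptop : ∀ᵐ x ∂(mu2 P Q), P.rnDeriv (mu2 P Q) x ≠ ⊤ :=
    (Measure.rnDeriv_lt_top P (mu2 P Q)).mono fun x h => h.ne
  have htopmeas : MeasurableSet (topSet P Q) :=
    (Measure.measurable_rnDeriv P (mu2 P Q)) (measurableSet_singleton 0)
  set U : Set ℝ := {l : ℝ | 0 ≤ l ∧ P (lamSet P Q (ENNReal.ofReal l)) ≤ ENNReal.ofReal α}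
    with hUdef
  by_cases hUne : U.Nonempty
  · -- U nonempty: classic Neyman–Pearson threshold
    have hUbdd : BddBelow U := ⟨0, fun l hl => hl.1⟩
    set lam₀ := sInf U with hlam₀
    have hlam₀0 : 0 ≤ lam₀ := le_csInf hUne fun l hl => hl.1
    have hupward : ∀ l : ℝ, lam₀ < l →
        P (lamSet P Q (ENNReal.ofReal l)) ≤ ENNReal.ofReal α := by
      intro l hl
      obtain ⟨v, hvU, hvl⟩ := (csInf_lt_iff hUbdd hUne).mp hl
      exact le_trans (measure_mono (lamSet_antitone (P := P) (Q := Q)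
        (ENNReal.ofReal_le_ofReal hvl.le))) hvU.2
    -- the set S₊
    obtain ⟨u, huanti, hugt, hutend⟩ := exists_seq_strictAnti_tendsto lam₀
    set E : ℕ → Set X := fun n => lamSet P Q (ENNReal.ofReal (u n)) with hE
    have hEmono : Monotone E := fun n m hnm =>
      lamSet_antitone (P := P) (Q := Q) (ENNReal.ofReal_le_ofReal (huanti.antitone hnm))
    set Sp := ⋃ n, E n with hSp
    have hPtendp : Tendsto (fun n => P (E n)) atTop (nhds (P Sp)) :=
      tendsto_measure_iUnion_atTop hEmono
    have hQtendp : Tendsto (fun n => Q (E n)ᶜ) atTop (nhds (Q Spᶜ)) := by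
      rw [hSp, compl_iUnion]
      exact tendsto_measure_iInter_atTop
        (fun n => ((lamSet_measurable (P := P) (Q := Q) _).compl).nullMeasurableSet)
        (fun n m hnm => compl_subset_compl.mpr (hEmono hnm)) ⟨0, measure_ne_top Q _⟩
    have hmemP : ((P Sp).toReal, (Q Spᶜ).toReal) ∈ C :=
      mem_closure_pts 𝒮 (fun n => exists_S_of_att (P := P) (Q := Q) hatt
        (ENNReal.ofReal (u n)) ENNReal.ofReal_ne_top) hPtendp hQtendp
    have hPSp : P Sp ≤ ENNReal.ofReal α :=
      le_of_tendsto' hPtendp fun n => hupward _ (hugt n)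
    have haP : (P Sp).toReal ≤ α := by
      have := ENNReal.toReal_mono ENNReal.ofReal_ne_top hPSp
      rwa [ENNReal.toReal_ofReal hα.1] at this
    have hNPp : (Q Spᶜ).toReal + lam₀ * ((P Sp).toReal - α) ≤ b := by
      refine NP_real (P := P) (Q := Q) lam₀ hlam₀0
        (MeasurableSet.iUnion fun n => lamSet_measurable (P := P) (Q := Q) _) ?_ hφ hφα
      filter_upwards [hptop] with x hpx
      constructor
      · intro hx
        obtain ⟨n, hn⟩ := mem_iUnion.mp hx
        simp only [hE, lamSet, mem_setOf_eq] at hn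
        calc ENNReal.ofReal lam₀ * P.rnDeriv (mu2 P Q) x
            ≤ ENNReal.ofReal (u n) * P.rnDeriv (mu2 P Q) x :=
              mul_le_mul_left (ENNReal.ofReal_le_ofReal (hugt n).le) _
          _ ≤ Q.rnDeriv (mu2 P Q) x := le_of_lt hn
      · intro hx
        simp only [hSp, mem_iUnion, not_exists, hE, lamSet, mem_setOf_eq, not_lt] at hx
        have htt : Tendsto (fun n => ENNReal.ofReal (u n) * P.rnDeriv (mu2 P Q) x) atTop
            (nhds (ENNReal.ofReal lam₀ * P.rnDeriv (mu2 P Q) x)) :=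
          ENNReal.Tendsto.mul_const (ENNReal.tendsto_ofReal hutend) (Or.inr hpx)
        exact ge_of_tendsto' htt hx
    -- the set S₋ (packaged)
    have hSm : ∃ am bm : ℝ, (am, bm) ∈ C ∧ α ≤ am ∧
        bm + lam₀ * (am - α) ≤ b := by
      rcases eq_or_lt_of_le hlam₀0 with hl0 | hl0
      · -- lam₀ = 0 : take univ
        refine ⟨(P (univ : Set X)).toReal, (Q (univ : Set X)ᶜ).toReal, ?_, ?_, ?_⟩
        · exact subset_closure (subset_convexHull ℝ _ ⟨univ, huniv, rfl⟩)
        · simp only [measure_univ, ENNReal.toReal_one]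
          exact hα.2
        · refine NP_real (P := P) (Q := Q) lam₀ hlam₀0 MeasurableSet.univ ?_ hφ hφα
          refine Filter.Eventually.of_forall fun x => ⟨fun _ => ?_, fun hx => absurd (mem_univ x) hx⟩
          rw [← hl0]
          simp
      · -- lam₀ > 0
        obtain ⟨v, hvmono, hvlt, hvtend⟩ := exists_seq_strictMono_tendsto lam₀
        set w : ℕ → ℝ := fun n => max (v n) 0 with hw
        have hw0 : ∀ n, 0 ≤ w n := fun n => le_max_right _ _
        have hwlt : ∀ n, w n < lam₀ := fun n => max_lt (hvlt n) hl0
        have hwmono : Monotone w := fun n m h => max_le_max (hvmono.monotone h) le_rfl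
        have hwtend : Tendsto w atTop (nhds lam₀) := by
          have h := hvtend.max (tendsto_const_nhds (x := (0:ℝ)))
          rwa [max_eq_left hl0.le] at h
        set F : ℕ → Set X := fun n => lamSet P Q (ENNReal.ofReal (w n)) with hF
        have hFanti : Antitone F := fun n m h =>
          lamSet_antitone (P := P) (Q := Q) (ENNReal.ofReal_le_ofReal (hwmono h))
        set Sm := ⋂ n, F n with hSmdef
        have hPtendm : Tendsto (fun n => P (F n)) atTop (nhds (P Sm)) :=
          tendsto_measure_iInter_atTop
            (fun n => (lamSet_measurable (P := P) (Q := Q) _).nullMeasurableSet)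
            hFanti ⟨0, measure_ne_top P _⟩
        have hQtendm : Tendsto (fun n => Q (F n)ᶜ) atTop (nhds (Q Smᶜ)) := by
          rw [hSmdef, compl_iInter]
          exact tendsto_measure_iUnion_atTop
            (fun n m hnm => compl_subset_compl.mpr (hFanti hnm))
        have hmemM : ((P Sm).toReal, (Q Smᶜ).toReal) ∈ C :=
          mem_closure_pts 𝒮 (fun n => exists_S_of_att (P := P) (Q := Q) hatt
            (ENNReal.ofReal (w n)) ENNReal.ofReal_ne_top) hPtendm hQtendm
        have hPF : ∀ n, ENNReal.ofReal α ≤ P (F n) := by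
          intro n
          by_contra hcon
          push_neg at hcon
          have hUmem : w n ∈ U := ⟨hw0 n, hcon.le⟩
          exact absurd (csInf_le hUbdd hUmem) (not_le.mpr (hwlt n))
        have hPSm : ENNReal.ofReal α ≤ P Sm := ge_of_tendsto' hPtendm hPF
        have ham : α ≤ (P Sm).toReal := by
          have := ENNReal.toReal_mono (measure_ne_top P Sm) hPSm
          rwa [ENNReal.toReal_ofReal hα.1] at this
        refine ⟨(P Sm).toReal, (Q Smᶜ).toReal, hmemM, ham, ?_⟩
        refine NP_real (P := P) (Q := Q) lam₀ hlam₀0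
          (MeasurableSet.iInter fun n => lamSet_measurable (P := P) (Q := Q) _) ?_ hφ hφα
        filter_upwards [hptop] with x hpx
        constructor
        · intro hx
          have hxall : ∀ n, ENNReal.ofReal (w n) * P.rnDeriv (mu2 P Q) x
              ≤ Q.rnDeriv (mu2 P Q) x := by
            intro n
            have := mem_iInter.mp hx n
            simp only [hF, lamSet, mem_setOf_eq] at this
            exact this.le
          have htt : Tendsto (fun n => ENNReal.ofReal (w n) * P.rnDeriv (mu2 P Q) x) atTop
              (nhds (ENNReal.ofReal lam₀ * P.rnDeriv (mu2 P Q) x)) :=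
            ENNReal.Tendsto.mul_const (ENNReal.tendsto_ofReal hwtend) (Or.inr hpx)
          exact le_of_tendsto' htt hxall
        · intro hx
          simp only [hSmdef, mem_iInter, not_forall] at hx
          obtain ⟨n, hn⟩ := hx
          simp only [hF, lamSet, mem_setOf_eq, not_lt] at hn
          calc Q.rnDeriv (mu2 P Q) x ≤ ENNReal.ofReal (w n) * P.rnDeriv (mu2 P Q) x := hn
            _ ≤ ENNReal.ofReal lam₀ * P.rnDeriv (mu2 P Q) x :=
              mul_le_mul_left (ENNReal.ofReal_le_ofReal (hwlt n).le) _
    obtain ⟨am, bm, hmemM, ham, hNPm⟩ := hSm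
    set aP := (P Sp).toReal with haPdef
    set bP := (Q Spᶜ).toReal with hbPdef
    by_cases hend : am ≤ α
    · have haeq : am = α := le_antisymm hend ham
      refine ⟨bm, ?_, ?_⟩
      · rw [← haeq]; exact hmemM
      · nlinarith [hNPm, haeq]
    · push_neg at hend
      set t := (am - α)/(am - aP) with ht
      have hd : 0 < am - aP := by linarith
      have ht0 : 0 ≤ t := div_nonneg (by linarith) hd.le
      have ht1 : t ≤ 1 := by
        rw [ht, div_le_one hd]
        linarith
      have hcombo : t * aP + (1 - t) * am = α := by
        have hmul : t * (am - aP) = am - α := div_mul_cancel₀ _ hd.ne'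
        nlinarith [hmul]
      have hzC : (α, t * bP + (1 - t) * bm) ∈ C := by
        have hconv := ((convex_convexHull ℝ (Kpts P Q 𝒮)).closure) hmemP hmemM ht0
          (by linarith : (0:ℝ) ≤ 1 - t) (by ring : t + (1 - t) = 1)
        have heq : t • ((aP : ℝ), bP) + (1 - t) • ((am : ℝ), bm)
            = (t * aP + (1 - t) * am, t * bP + (1 - t) * bm) := by
          rw [Prod.smul_mk, Prod.smul_mk, Prod.mk_add_mk]
          rfl
        rw [heq, hcombo] at hconv
        exact hconv
      refine ⟨t * bP + (1 - t) * bm, hzC, ?_⟩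
      nlinarith [mul_le_mul_of_nonneg_left hNPp ht0,
        mul_le_mul_of_nonneg_left hNPm (by linarith : (0:ℝ) ≤ 1 - t), hcombo]
  · -- U empty : α must be 0, use the top set
    have hallgt : ∀ l : ℝ, 0 ≤ l →
        ENNReal.ofReal α < P (lamSet P Q (ENNReal.ofReal l)) := by
      intro l hl
      by_contra h
      exact hUne ⟨l, hl, not_lt.mp h⟩
    have hPq : P {x | Q.rnDeriv (mu2 P Q) x = ⊤} = 0 :=
      absCont_P P Q (mu2_q_top (P := P) (Q := Q))
    have hPp0 : P (topSet P Q) = 0 := P_topSet (P := P) (Q := Q)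
    set D : ℕ → Set X := fun n => lamSet P Q (ENNReal.ofReal (n:ℝ)) with hD
    have hDanti : Antitone D := fun n m hnm =>
      lamSet_antitone (P := P) (Q := Q) (ENNReal.ofReal_le_ofReal (by exact_mod_cast hnm))
    have hDsub : (⋂ n, D n) ⊆ topSet P Q ∪ {x | Q.rnDeriv (mu2 P Q) x = ⊤} := by
      intro x hx
      simp only [mem_iInter, hD, lamSet, mem_setOf_eq] at hx
      by_cases hqx : Q.rnDeriv (mu2 P Q) x = ⊤
      · exact Or.inr hqx
      left
      by_contra hpx
      simp only [topSet, mem_setOf_eq] at hpx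
      by_cases hpt : P.rnDeriv (mu2 P Q) x = ⊤
      · have h1 := hx 1
        rw [hpt] at h1
        rw [ENNReal.mul_top (by simp)] at h1
        exact absurd h1 not_top_lt
      · obtain ⟨n, hn⟩ := ENNReal.exists_nat_gt
          (show Q.rnDeriv (mu2 P Q) x / P.rnDeriv (mu2 P Q) x ≠ ⊤ from
            (ENNReal.div_lt_top hqx hpx).ne)
        have h2 : Q.rnDeriv (mu2 P Q) x ≤ (n : ℝ≥0∞) * P.rnDeriv (mu2 P Q) x :=
          (ENNReal.div_le_iff hpx hpt).mp hn.le
        have h3 := hx n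
        rw [ENNReal.ofReal_natCast] at h3
        exact absurd h3 (not_lt.mpr h2)
    have hPD0 : P (⋂ n, D n) = 0 := by
      have hle : P (⋂ n, D n) ≤ P (topSet P Q) + P {x | Q.rnDeriv (mu2 P Q) x = ⊤} :=
        le_trans (measure_mono hDsub) (measure_union_le _ _)
      rw [hPp0, hPq, add_zero] at hle
      exact le_antisymm hle zero_le
    have htendD : Tendsto (fun n => P (D n)) atTop (nhds 0) := by
      rw [← hPD0]
      exact tendsto_measure_iInter_atTop
        (fun n => (lamSet_measurable (P := P) (Q := Q) _).nullMeasurableSet)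
        hDanti ⟨0, measure_ne_top P _⟩
    have hα0 : α = 0 := by
      have hle : ENNReal.ofReal α ≤ 0 :=
        ge_of_tendsto' htendD fun n => (hallgt (n:ℝ) (Nat.cast_nonneg n)).le
      have h0 : α ≤ 0 := ENNReal.ofReal_eq_zero.mp (le_antisymm hle zero_le)
      exact le_antisymm h0 hα.1
    subst hα0
    obtain ⟨S, hS, h1, h2⟩ := exists_S_top (P := P) (Q := Q) hatt
    refine ⟨(Q (topSet P Q)ᶜ).toReal, ?_, ?_⟩
    · have hmem : ((P S).toReal, (Q Sᶜ).toReal) ∈ Kpts P Q 𝒮 := ⟨S, hS, rfl⟩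
      have hmem2 := subset_closure (subset_convexHull ℝ _ hmem)
      rw [h1, h2, hPp0] at hmem2
      simpa using hmem2
    · -- the test is null under P, bound its Q-integral
      have hint0 : ∫ x, φ x ∂P = 0 :=
        le_antisymm hφα (integral_nonneg fun x => (hφ.2 x).1)
      have hae0 : φ =ᵐ[P] 0 :=
        (integral_eq_zero_iff_of_nonneg (fun x => (hφ.2 x).1) (hφ.integrable P)).mp hint0
      have hmeasφ : MeasurableSet {x | φ x ≠ 0} :=
        (hφ.1 (measurableSet_singleton (0:ℝ))).compl
      have hNP0 : P {x | φ x ≠ 0} = 0 := by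
        have h := ae_iff.mp hae0
        simpa using h
      have hzero : ∫⁻ x in {x | φ x ≠ 0}, P.rnDeriv (mu2 P Q) x ∂(mu2 P Q) = 0 := by
        have h3 : ((mu2 P Q).withDensity (P.rnDeriv (mu2 P Q))) {x | φ x ≠ 0}
            = ∫⁻ x in {x | φ x ≠ 0}, P.rnDeriv (mu2 P Q) x ∂(mu2 P Q) :=
          withDensity_apply _ hmeasφ
        rw [withDensity_p P Q] at h3
        rw [← h3, hNP0]
      have hμae : ∀ᵐ x ∂(mu2 P Q), φ x ≠ 0 → P.rnDeriv (mu2 P Q) x = 0 := by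
        have h4 := (setLIntegral_eq_zero_iff hmeasφ
          (Measure.measurable_rnDeriv P (mu2 P Q))).mp hzero
        exact h4.mono fun x hx hφx => hx hφx
      have hQae : ∀ᵐ x ∂Q, φ x ≤ (topSet P Q).indicator (fun _ => (1:ℝ)) x := by
        have h7 : ∀ᵐ x ∂Q, φ x ≠ 0 → P.rnDeriv (mu2 P Q) x = 0 := (absCont_Q P Q).ae_le hμae
        refine h7.mono fun x hx => ?_
        by_cases hxt : x ∈ topSet P Q
        · simp only [indicator_of_mem hxt]
          exact (hφ.2 x).2
        · simp only [indicator_of_notMem hxt]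
          by_contra h
          push_neg at h
          exact hxt (hx (ne_of_gt h))
      have hint_le : ∫ x, φ x ∂Q ≤ (Q (topSet P Q)).toReal := by
        have h6 := integral_mono_ae (hφ.integrable Q)
          ((integrable_const (1:ℝ)).indicator htopmeas) hQae
        rwa [integral_indicator_const (1:ℝ) htopmeas, smul_eq_mul, mul_one] at h6
      rw [hb, hφ.int_one_sub, toReal_compl (Q := Q) _ htopmeas]
      linarith


end Stmt6Aux

open Stmt6Aux in
/-- under `𝒮`-attainability, for all `α ∈ [0,1]`,
`T(P,Q)(α) = inf { β : (α,β) ∈ closed convex hull of {(P(S), Q(Sᶜ)) : S ∈ 𝒮} }`. -/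
theorem stmt6 {X : Type*} [MeasurableSpace X] (P Q : Measure X)
    [IsProbabilityMeasure P] [IsProbabilityMeasure Q]
    (𝒮 : Set (Set X)) (hmeas : ∀ A ∈ 𝒮, MeasurableSet A)
    (hempty : ∅ ∈ 𝒮) (huniv : univ ∈ 𝒮)
    (hatt : SAttainable 𝒮 P Q) :
    ∀ α ∈ Icc (0:ℝ) 1,
      tradeoff P Q α =
        sInf {b : ℝ | (α, b) ∈
          closure (convexHull ℝ {p : ℝ × ℝ | ∃ S ∈ 𝒮, p = ((P S).toReal, (Q Sᶜ).toReal)})} := by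
  intro α hα
  have hKeq : {p : ℝ × ℝ | ∃ S ∈ 𝒮, p = ((P S).toReal, (Q Sᶜ).toReal)} = Kpts P Q 𝒮 := rfl
  rw [hKeq]
  -- B is nonempty: the segment between (1,0) and (0,1)
  have h10 : ((1:ℝ), (0:ℝ)) ∈ Kpts P Q 𝒮 := ⟨univ, huniv, by simp⟩
  have h01 : ((0:ℝ), (1:ℝ)) ∈ Kpts P Q 𝒮 := ⟨∅, hempty, by simp⟩
  have hseg := (convex_convexHull ℝ (Kpts P Q 𝒮)) (subset_convexHull ℝ _ h10)
    (subset_convexHull ℝ _ h01) hα.1 (by linarith [hα.2] : (0:ℝ) ≤ 1 - α) (by ring)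
  have hsegpt : α • ((1:ℝ), (0:ℝ)) + (1 - α) • ((0:ℝ), (1:ℝ)) = (α, 1 - α) := by
    rw [Prod.smul_mk, Prod.smul_mk, Prod.mk_add_mk]
    simp
  rw [hsegpt] at hseg
  have hBne : (1 - α) ∈ {b : ℝ | (α, b) ∈ closure (convexHull ℝ (Kpts P Q 𝒮))} :=
    subset_closure hseg
  have hBdd : BddBelow {b : ℝ | (α, b) ∈ closure (convexHull ℝ (Kpts P Q 𝒮))} := by
    refine ⟨0, fun b hb => ?_⟩
    exact ((closure_hull_subset_Icc (P := P) (Q := Q) 𝒮) hb).1.2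
  apply le_antisymm
  · exact le_csInf ⟨1 - α, hBne⟩ fun b hb => dirI 𝒮 hmeas hα hb
  · unfold tradeoff
    refine le_csInf ⟨1, ?_⟩ ?_
    · refine ⟨fun _ => 0, measurable_const, fun x => ⟨le_rfl, zero_le_one⟩, by simp [hα.1], ?_⟩
      simp
    · rintro b ⟨ψ, hm, h01', hint, rfl⟩
      obtain ⟨b', hb'C, hb'le⟩ := dirII 𝒮 huniv hatt hα ⟨hm, h01'⟩ hint
      exact le_trans (csInf_le hBdd hb'C) hb'le
end

section
/- For τ∈(0,1/2], the function h₊(t) = min{ t + √(τ·min{t,(1−t)_+}) + τ, 1 } is concave and non-decreasing on [0,1]. -/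
open Set

/-- `V(t) = min{t, (1-t)₊}`. -/
noncomputable def Vfun (t : ℝ) : ℝ := min t (max (1 - t) 0)

/-- `h₊(t) = min{ t + √(τ V(t)) + τ, 1 }`. -/
noncomputable def hplus (τ t : ℝ) : ℝ := min (t + Real.sqrt (τ * Vfun t) + τ) 1

lemma concaveOn_sqrt01 : ConcaveOn ℝ (Icc (0:ℝ) 1) Real.sqrt :=
  Real.strictConcaveOn_sqrt.concaveOn.subset (fun x hx => hx.1) (convex_Icc 0 1)

lemma concaveOn_sqrt1sub : ConcaveOn ℝ (Icc (0:ℝ) 1) (fun t => Real.sqrt (1 - t)) := by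
  refine ⟨convex_Icc 0 1, fun x hx y hy a b ha hb hab => ?_⟩
  have h := Real.strictConcaveOn_sqrt.concaveOn.2 (x := 1 - x) (y := 1 - y)
    (by simp [hx.2]) (by simp [hy.2]) ha hb hab
  have e : a • (1 - x) + b • (1 - y) = 1 - (a • x + b • y) := by
    simp only [smul_eq_mul]; nlinarith [hab]
  rw [e] at h
  simpa using h

lemma hplus_eq (τ : ℝ) (hτ : 0 ≤ τ) {t : ℝ} (ht : t ∈ Icc (0:ℝ) 1) :
    hplus τ t = min (min (t + Real.sqrt τ * Real.sqrt t + τ)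
      (t + Real.sqrt τ * Real.sqrt (1 - t) + τ)) 1 := by
  have hV : Vfun t = min t (1 - t) := by
    simp [Vfun, max_eq_left (by linarith [ht.2] : (0:ℝ) ≤ 1 - t)]
  have hs : Real.sqrt (τ * Vfun t) = Real.sqrt τ * Real.sqrt (min t (1 - t)) := by
    rw [hV, Real.sqrt_mul hτ]
  rw [hplus, hs, Monotone.map_min (fun a b h => Real.sqrt_le_sqrt h)]
  rw [mul_min_of_nonneg _ _ (Real.sqrt_nonneg τ)]
  congr 1
  rw [min_add_add_right, min_add_add_left]

/-- for `τ ∈ (0, 1/2]`, `h₊` is concave and non-decreasing on `[0,1]`. -/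
theorem stmt8 (τ : ℝ) (hτ : τ ∈ Ioc (0:ℝ) (1/2)) :
    ConcaveOn ℝ (Icc (0:ℝ) 1) (hplus τ) ∧ MonotoneOn (hplus τ) (Icc (0:ℝ) 1) := by
  have hτ0 : 0 ≤ τ := hτ.1.le
  have hid : ConcaveOn ℝ (Icc (0:ℝ) 1) (fun t : ℝ => t + τ) :=
    (concaveOn_id (convex_Icc 0 1)).add (concaveOn_const _ (convex_Icc 0 1))
  have h1 : ConcaveOn ℝ (Icc (0:ℝ) 1)
      (fun t => t + Real.sqrt τ * Real.sqrt t + τ) := by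
    have := hid.add (concaveOn_sqrt01.smul (Real.sqrt_nonneg τ))
    convert this using 2 with t
    · rfl
    simp [smul_eq_mul]; ring
  have h2 : ConcaveOn ℝ (Icc (0:ℝ) 1)
      (fun t => t + Real.sqrt τ * Real.sqrt (1 - t) + τ) := by
    have := hid.add (concaveOn_sqrt1sub.smul (Real.sqrt_nonneg τ))
    convert this using 2 with t
    · rfl
    simp [smul_eq_mul]; ring
  have hg : ConcaveOn ℝ (Icc (0:ℝ) 1)
      (fun t => min (min (t + Real.sqrt τ * Real.sqrt t + τ)
        (t + Real.sqrt τ * Real.sqrt (1 - t) + τ)) 1) :=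
    (h1.inf h2).inf (concaveOn_const _ (convex_Icc 0 1))
  have hcc : ConcaveOn ℝ (Icc (0:ℝ) 1) (hplus τ) := by
    refine ⟨convex_Icc 0 1, fun x hx y hy a b ha hb hab => ?_⟩
    have hmem := (convex_Icc (0:ℝ) 1) hx hy ha hb hab
    rw [hplus_eq τ hτ0 hmem, hplus_eq τ hτ0 hx, hplus_eq τ hτ0 hy]
    exact hg.2 hx hy ha hb hab
  refine ⟨hcc, fun x hx y hy hxy => ?_⟩
  have h1v : hplus τ 1 = 1 := by
    have : Vfun 1 = 0 := by norm_num [Vfun]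
    simp [hplus, this, min_eq_right, hτ.1.le]
  have hle1 : hplus τ x ≤ 1 := min_le_right _ _
  rcases eq_or_lt_of_le hx.2 with h | h
  · have : y = 1 := le_antisymm hy.2 (h ▸ hxy)
    rw [this, ← h]
  · set b := (y - x) / (1 - x) with hb
    have hx1 : (0:ℝ) < 1 - x := by linarith
    have hb0 : 0 ≤ b := div_nonneg (by linarith) hx1.le
    have hb1 : b ≤ 1 := by
      rw [div_le_one hx1]; linarith [hy.2]
    have ha0 : 0 ≤ 1 - b := by linarith
    have hab : (1 - b) + b = 1 := by ring
    have hyeq : (1 - b) • x + b • (1:ℝ) = y := by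
      simp only [smul_eq_mul, mul_one]
      rw [hb]; field_simp
      ring
    have := hcc.2 hx (by norm_num : (1:ℝ) ∈ Icc (0:ℝ) 1) ha0 hb0 hab
    rw [hyeq, h1v] at this
    calc hplus τ x = (1 - b) * hplus τ x + b * hplus τ x := by ring
      _ ≤ (1 - b) • hplus τ x + b • 1 := by
          simp only [smul_eq_mul, mul_one]
          nlinarith [hle1]
      _ ≤ hplus τ y := this
end

section
/- Let f₀:[0,1]→[0,1] be a trade-off function (convex, continuous, non-increasing, f₀(1)=0). Define the density r(x) = 1_{[f₀(0)−1, 0)}(x) − (f₀)'₊(x)·1_{[0,1]}(x), where (f₀)'₊ is the right derivative. Then r is a probability density on ℝ, and the associated measure R satisfies R((x,∞)) = f₀(x) for every x∈[0,1]. -/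
open Set MeasureTheory Filter Topology

/-- The density `r(x) = 1_{[f₀(0)−1, 0)}(x) − (f₀)'₊(x)·1_{[0,1]}(x)`, where the right
derivative is `derivWithin f₀ (Ici x) x`. -/
noncomputable def rdens (f₀ : ℝ → ℝ) (x : ℝ) : ℝ :=
  (Ico (f₀ 0 - 1) 0).indicator (fun _ => (1:ℝ)) x
    - derivWithin f₀ (Ici x) x * (Icc (0:ℝ) 1).indicator (fun _ => (1:ℝ)) x

section aux

variable {f₀ : ℝ → ℝ}

lemma rd_bddBelow (hconv : ConvexOn ℝ (Icc (0:ℝ) 1) f₀) {x : ℝ} (hx : x ∈ Ioo (0:ℝ) 1) :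
    BddBelow (slope f₀ x '' Ioo x 1) := by
  refine ⟨slope f₀ x 0, ?_⟩
  rintro _ ⟨y, hy, rfl⟩
  rw [slope_def_field, slope_def_field]
  exact hconv.secant_mono ⟨hx.1.le, hx.2.le⟩ ⟨le_refl 0, zero_le_one⟩
    ⟨hx.1.le.trans hy.1.le, hy.2.le⟩ (ne_of_lt hx.1) (ne_of_gt hy.1)
    (le_of_lt (hx.1.trans hy.1))

/-- Key fact: at interior points, the convex function has a right derivative equal to
the infimum of slopes. -/
lemma rightDeriv_spec (hconv : ConvexOn ℝ (Icc (0:ℝ) 1) f₀) {x : ℝ} (hx : x ∈ Ioo (0:ℝ) 1) :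
    HasDerivWithinAt f₀ (derivWithin f₀ (Ici x) x) (Ici x) x ∧
      derivWithin f₀ (Ici x) x = sInf (slope f₀ x '' Ioo x 1) := by
  have hxI : x ∈ Icc (0:ℝ) 1 := ⟨hx.1.le, hx.2.le⟩
  have hmono : MonotoneOn (slope f₀ x) (Ioo x 1) := by
    intro a ha b hb hab
    rw [slope_def_field, slope_def_field]
    exact hconv.secant_mono hxI ⟨hx.1.le.trans ha.1.le, ha.2.le⟩
      ⟨hx.1.le.trans hb.1.le, hb.2.le⟩ (ne_of_gt ha.1) (ne_of_gt hb.1) hab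
  have hne : (Ioo x 1).Nonempty := nonempty_Ioo.2 hx.2
  have htend : Tendsto (slope f₀ x) (𝓝[>] x) (𝓝 (sInf (slope f₀ x '' Ioo x 1))) :=
    MonotoneOn.tendsto_nhdsWithin_Ioo_right hne hmono (rd_bddBelow hconv hx)
  have hD : HasDerivWithinAt f₀ (sInf (slope f₀ x '' Ioo x 1)) (Ici x) x := by
    rw [hasDerivWithinAt_iff_tendsto_slope, Ici_sdiff_left]
    exact htend
  have heq : derivWithin f₀ (Ici x) x = sInf (slope f₀ x '' Ioo x 1) :=
    hD.derivWithin (uniqueDiffOn_Ici x x self_mem_Ici)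
  exact ⟨heq ▸ hD, heq⟩

lemma rightDeriv_nonpos (hconv : ConvexOn ℝ (Icc (0:ℝ) 1) f₀)
    (hanti : AntitoneOn f₀ (Icc (0:ℝ) 1)) {x : ℝ} (hx : x ∈ Ioo (0:ℝ) 1) :
    derivWithin f₀ (Ici x) x ≤ 0 := by
  obtain ⟨-, heq⟩ := rightDeriv_spec hconv hx
  obtain ⟨y, hy⟩ := nonempty_Ioo.2 hx.2
  have h1 : derivWithin f₀ (Ici x) x ≤ slope f₀ x y := by
    rw [heq]; exact csInf_le (rd_bddBelow hconv hx) (mem_image_of_mem _ hy)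
  refine h1.trans ?_
  rw [slope_def_field]
  apply div_nonpos_of_nonpos_of_nonneg
  · have := hanti ⟨hx.1.le, hx.2.le⟩ ⟨hx.1.le.trans hy.1.le, hy.2.le⟩ hy.1.le
    linarith
  · linarith [hy.1]

lemma rightDeriv_mono (hconv : ConvexOn ℝ (Icc (0:ℝ) 1) f₀) :
    MonotoneOn (fun x => derivWithin f₀ (Ici x) x) (Ioo (0:ℝ) 1) := by
  intro x hx y hy hxy
  rcases eq_or_lt_of_le hxy with rfl | hxy
  · exact le_rfl
  obtain ⟨-, heqx⟩ := rightDeriv_spec hconv hx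
  obtain ⟨-, heqy⟩ := rightDeriv_spec hconv hy
  have h1 : derivWithin f₀ (Ici x) x ≤ slope f₀ x y := by
    rw [heqx]
    exact csInf_le (rd_bddBelow hconv hx) (mem_image_of_mem _ ⟨hxy, hy.2⟩)
  have h2 : slope f₀ x y ≤ sInf (slope f₀ y '' Ioo y 1) := by
    refine le_csInf ((nonempty_Ioo.2 hy.2).image _) ?_
    rintro _ ⟨z, hz, rfl⟩
    rw [slope_comm, slope_def_field, slope_def_field]
    exact hconv.secant_mono ⟨hy.1.le, hy.2.le⟩ ⟨hx.1.le, hx.2.le⟩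
      ⟨hy.1.le.trans hz.1.le, hz.2.le⟩ (ne_of_lt hxy) (ne_of_gt hz.1)
      (hxy.le.trans hz.1.le)
  simp only []
  rw [heqy]
  exact h1.trans h2

end aux

/-- for a trade-off function `f₀` (convex, continuous, non-increasing,
`f₀(1)=0`, values in `[0,1]`), `r` is a probability density on `ℝ` and the associated
measure `R = r·Leb` satisfies `R((x,∞)) = f₀(x)` for all `x ∈ [0,1]`. -/
theorem stmt16 (f₀ : ℝ → ℝ)
    (hconv : ConvexOn ℝ (Icc (0:ℝ) 1) f₀) (hcont : ContinuousOn f₀ (Icc (0:ℝ) 1))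
    (hanti : AntitoneOn f₀ (Icc (0:ℝ) 1)) (h1 : f₀ 1 = 0)
    (hrange : ∀ t ∈ Icc (0:ℝ) 1, f₀ t ∈ Icc (0:ℝ) 1) :
    (∀ᵐ x ∂(volume : Measure ℝ), 0 ≤ rdens f₀ x) ∧
    (∫ x, rdens f₀ x = 1) ∧
    ∀ x ∈ Icc (0:ℝ) 1,
      ((volume.withDensity (fun y => ENNReal.ofReal (rdens f₀ y))) (Ioi x)).toReal = f₀ x := by
  set g : ℝ → ℝ := fun x => derivWithin f₀ (Ici x) x with hg
  have hgmono : MonotoneOn g (Ioo (0:ℝ) 1) := rightDeriv_mono hconv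
  have hgsign : ∀ x ∈ Ioo (0:ℝ) 1, g x ≤ 0 := fun x hx => rightDeriv_nonpos hconv hanti hx
  have hgderiv : ∀ x ∈ Ioo (0:ℝ) 1, HasDerivWithinAt f₀ (g x) (Ioi x) x := fun x hx =>
    ((rightDeriv_spec hconv hx).1).mono Ioi_subset_Ici_self
  -- interval integrability on compact subintervals of (0,1)
  have hII : ∀ a b : ℝ, 0 < a → a ≤ b → b < 1 → IntervalIntegrable g volume a b := by
    intro a b ha hab hb
    refine MonotoneOn.intervalIntegrable (hgmono.mono ?_)
    rw [uIcc_of_le hab]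
    exact fun t ht => ⟨ha.trans_le ht.1, lt_of_le_of_lt ht.2 hb⟩
  -- FTC on compact subintervals
  have hFTCsub : ∀ a b : ℝ, 0 < a → a ≤ b → b < 1 → ∫ t in a..b, g t = f₀ b - f₀ a := by
    intro a b ha hab hb
    refine intervalIntegral.integral_eq_sub_of_hasDeriv_right_of_le hab
      (hcont.mono fun t ht => ⟨ha.le.trans ht.1, ht.2.trans hb.le⟩) ?_ (hII a b ha hab hb)
    intro t ht
    exact hgderiv t ⟨ha.trans ht.1, ht.2.trans hb⟩
  -- integrability on (0,1]
  have hInt : IntegrableOn g (Ioc (0:ℝ) 1) := by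
    set a : ℕ → ℝ := fun n => 1 / (n + 2) with ha
    set b : ℕ → ℝ := fun n => 1 - 1 / (n + 2) with hb
    have haux : ∀ n : ℕ, 0 < a n ∧ a n ≤ b n ∧ b n < 1 := by
      intro n
      have h2 : (0:ℝ) < (n:ℝ) + 2 := by positivity
      have h3 : 1 / ((n:ℝ) + 2) ≤ 1 / 2 := by
        apply div_le_div_of_nonneg_left one_pos.le two_pos
        linarith [Nat.cast_nonneg (α := ℝ) n]
      constructor
      · positivity
      constructor
      · simp only [ha, hb]; linarith
      · simp only [hb]
        have : 0 < 1 / ((n:ℝ) + 2) := by positivity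
        linarith
    have hta : Tendsto a atTop (𝓝 0) := by
      have h1 : Tendsto (fun n : ℕ => (n:ℝ) + 2) atTop atTop :=
        tendsto_atTop_add_const_right _ 2 tendsto_natCast_atTop_atTop
      have h2 : Tendsto (fun n : ℕ => ((n:ℝ) + 2)⁻¹) atTop (𝓝 0) := h1.inv_tendsto_atTop
      simpa [ha, one_div] using h2
    have htb : Tendsto b atTop (𝓝 1) := by
      have := (tendsto_const_nhds : Tendsto (fun _ : ℕ => (1:ℝ)) atTop (𝓝 1)).sub hta
      simpa [hb, ha, one_div] using this
    refine integrableOn_Ioc_of_intervalIntegral_norm_bounded (I := 1)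
      (fun n => ?_) hta htb ?_
    · obtain ⟨h1n, h2n, h3n⟩ := haux n
      exact (intervalIntegrable_iff_integrableOn_Ioc_of_le h2n).1 (hII _ _ h1n h2n h3n)
    · refine Filter.Eventually.of_forall fun n => ?_
      obtain ⟨h1n, h2n, h3n⟩ := haux n
      have hnorm : ∫ x in Ioc (a n) (b n), ‖g x‖ = ∫ x in Ioc (a n) (b n), (-g x) := by
        refine setIntegral_congr_fun measurableSet_Ioc fun t ht => ?_
        exact Real.norm_of_nonpos (hgsign t ⟨h1n.trans ht.1, lt_of_le_of_lt ht.2 h3n⟩)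
      have hval : ∫ x in Ioc (a n) (b n), g x = f₀ (b n) - f₀ (a n) := by
        rw [← intervalIntegral.integral_of_le h2n]
        exact hFTCsub _ _ h1n h2n h3n
      rw [hnorm, integral_neg, hval]
      have hra := hrange (a n) ⟨h1n.le, h2n.trans h3n.le⟩
      have hrb := hrange (b n) ⟨h1n.le.trans h2n, h3n.le⟩
      simp only [mem_Icc] at hra hrb
      linarith
  -- FTC on [x,1] for x ∈ [0,1]
  have hFTC : ∀ x ∈ Icc (0:ℝ) 1, ∫ t in x..(1:ℝ), g t = f₀ 1 - f₀ x := by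
    intro x hx
    refine intervalIntegral.integral_eq_sub_of_hasDeriv_right_of_le hx.2
      (hcont.mono fun t ht => ⟨hx.1.trans ht.1, ht.2⟩) ?_ ?_
    · intro t ht
      exact hgderiv t ⟨lt_of_le_of_lt hx.1 ht.1, ht.2⟩
    · rw [intervalIntegrable_iff_integrableOn_Ioc_of_le hx.2]
      exact hInt.mono_set (fun t ht => ⟨lt_of_le_of_lt hx.1 ht.1, ht.2⟩)
  have hr0 : (0:ℝ) ≤ f₀ 0 := (hrange 0 ⟨le_rfl, zero_le_one⟩).1
  have hr1 : f₀ 0 ≤ 1 := (hrange 0 ⟨le_rfl, zero_le_one⟩).2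
  have hne01 : ∀ᵐ x : ℝ ∂volume, x ≠ 0 ∧ x ≠ 1 := by
    have h0 : ∀ᵐ x : ℝ ∂volume, x ≠ 0 := by
      rw [ae_iff]; simpa using Real.volume_singleton (x := 0)
    have h1' : ∀ᵐ x : ℝ ∂volume, x ≠ 1 := by
      rw [ae_iff]; simpa using Real.volume_singleton (x := 1)
    exact h0.and h1'
  -- pointwise description of rdens away from {0,1}
  have hrd : ∀ x : ℝ, x ≠ 0 → x ≠ 1 →
      rdens f₀ x = if x ∈ Ioo (0:ℝ) 1 then -g x
        else (Ico (f₀ 0 - 1) 0).indicator (fun _ => (1:ℝ)) x := by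
    intro x hx0 hx1
    by_cases hx : x ∈ Ioo (0:ℝ) 1
    · have h1m : x ∈ Icc (0:ℝ) 1 := ⟨hx.1.le, hx.2.le⟩
      have h2m : x ∉ Ico (f₀ 0 - 1) 0 := fun h => absurd h.2 (not_lt.2 hx.1.le)
      simp [rdens, hx, hg, indicator_of_mem h1m, indicator_of_notMem h2m]
    · have h1m : x ∉ Icc (0:ℝ) 1 := fun hc =>
        hx ⟨lt_of_le_of_ne hc.1 (Ne.symm hx0), lt_of_le_of_ne hc.2 hx1⟩
      simp [rdens, hx, indicator_of_notMem h1m]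
  refine ⟨?_, ?_, ?_⟩
  · -- a.e. nonnegativity
    filter_upwards [hne01] with x hx
    rw [hrd x hx.1 hx.2]
    by_cases h : x ∈ Ioo (0:ℝ) 1
    · simp only [h, if_true]
      linarith [hgsign x h]
    · simp only [h, if_false]
      exact indicator_nonneg (fun _ _ => zero_le_one) x
  · -- integral equals one
    have hre : (fun x => rdens f₀ x) = fun x =>
        (Ico (f₀ 0 - 1) 0).indicator (fun _ => (1:ℝ)) x - (Icc (0:ℝ) 1).indicator g x := by
      funext x
      by_cases hx : x ∈ Icc (0:ℝ) 1
      · simp [rdens, hg, indicator_of_mem hx]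
      · simp [rdens, indicator_of_notMem hx]
    have hint1 : Integrable ((Ico (f₀ 0 - 1) 0).indicator (fun _ => (1:ℝ))) volume := by
      rw [integrable_indicator_iff measurableSet_Ico]
      refine integrableOn_const ?_
      rw [Real.volume_Ico]
      exact ENNReal.ofReal_ne_top
    have hint2 : Integrable ((Icc (0:ℝ) 1).indicator g) volume := by
      rw [integrable_indicator_iff measurableSet_Icc]
      rw [IntegrableOn, ← Measure.restrict_congr_set Ioc_ae_eq_Icc]
      exact hInt
    rw [hre, integral_sub hint1 hint2]
    have hv1 : ∫ x, (Ico (f₀ 0 - 1) 0).indicator (fun _ => (1:ℝ)) x = 1 - f₀ 0 := by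
      rw [integral_indicator measurableSet_Ico, setIntegral_const, Real.volume_real_Ico_of_le (by linarith), smul_eq_mul,
        mul_one]
      ring
    have hv2 : ∫ x, (Icc (0:ℝ) 1).indicator g x = - f₀ 0 := by
      rw [integral_indicator measurableSet_Icc, integral_Icc_eq_integral_Ioc,
        ← intervalIntegral.integral_of_le zero_le_one, hFTC 0 ⟨le_rfl, zero_le_one⟩, h1]
      ring
    rw [hv1, hv2]; ring
  · -- the tail formula
    intro x hx
    rw [withDensity_apply _ measurableSet_Ioi]
    have hae : ∀ᵐ y ∂volume.restrict (Ioi x),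
        ENNReal.ofReal (rdens f₀ y) = (Ioo x 1).indicator (fun y => ENNReal.ofReal (-g y)) y := by
      have h1' : ∀ᵐ y : ℝ ∂volume.restrict (Ioi x), y ≠ 1 := by
        refine ae_restrict_of_ae ?_
        rw [ae_iff]; simpa using Real.volume_singleton (x := 1)
      filter_upwards [h1', ae_restrict_mem measurableSet_Ioi] with y hy1 hyx
      by_cases hy : y ∈ Ioo x 1
      · have hy0 : y ≠ 0 := ne_of_gt (lt_of_le_of_lt hx.1 hy.1)
        have hyIoo : y ∈ Ioo (0:ℝ) 1 := ⟨lt_of_le_of_lt hx.1 hy.1, hy.2⟩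
        rw [hrd y hy0 hy1, if_pos hyIoo, indicator_of_mem hy]
      · have hyge : 1 < y := by
          simp only [mem_Ioo, not_and_or, not_lt] at hy
          rcases hy with h | h
          · exact absurd hyx (not_lt.2 h)
          · exact lt_of_le_of_ne h (Ne.symm hy1)
        have hy0 : y ≠ 0 := by linarith
        rw [hrd y hy0 hy1, if_neg (fun hc => absurd hc.2 (not_lt.2 hyge.le)),
          indicator_of_notMem hy, indicator_of_notMem
            (fun hc : y ∈ Ico (f₀ 0 - 1) 0 => absurd hc.2 (not_lt.2 (by linarith : (0:ℝ) ≤ y)))]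
        simp
    have hIinter : Ioo x 1 ∩ Ioi x = Ioo x 1 := inter_eq_left.2 fun t ht => ht.1
    rw [lintegral_congr_ae hae, lintegral_indicator measurableSet_Ioo,
      Measure.restrict_restrict measurableSet_Ioo, hIinter]
    have hIooSub : Ioo x 1 ⊆ Ioo (0:ℝ) 1 := fun t ht => ⟨lt_of_le_of_lt hx.1 ht.1, ht.2⟩
    have hint : Integrable (fun y => -g y) (volume.restrict (Ioo x 1)) := by
      refine Integrable.neg ?_
      exact hInt.mono_set (fun t ht => ⟨lt_of_le_of_lt hx.1 ht.1, ht.2.le⟩)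
    have hnn : 0 ≤ᵐ[volume.restrict (Ioo x 1)] fun y => -g y := by
      refine (ae_restrict_iff' measurableSet_Ioo).2 (Filter.Eventually.of_forall fun t ht => ?_)
      simp only [Pi.zero_apply]
      linarith [hgsign t (hIooSub ht)]
    rw [← ofReal_integral_eq_lintegral_ofReal hint hnn]
    have hval : ∫ y in Ioo x 1, -g y = f₀ x := by
      rw [integral_neg, ← integral_Ioc_eq_integral_Ioo,
        ← intervalIntegral.integral_of_le hx.2, hFTC x hx, h1]
      ring
    rw [hval, ENNReal.toReal_ofReal (hrange x hx).1]
end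

section
/- Let P be uniform on [0,1] and R the measure with density r(x)=1_{[f₀(0)−1,0)}(x) − (f₀)'₊(x)·1_{[0,1]}(x) for a trade-off function f₀ with f₀(1)=0. Then the trade-off function of the pair (P,R) equals f₀: T(P,R)(α) = f₀(α) for all α∈[0,1]. -/
open Set MeasureTheory

section aux
variable {f₀ : ℝ → ℝ}

/-- slope monotone. -/
lemma slope_mono17 (hconv : ConvexOn ℝ (Icc (0:ℝ) 1) f₀) {x : ℝ} (hx : x ∈ Icc (0:ℝ) 1) :
    MonotoneOn (slope f₀ x) (Icc (0:ℝ) 1 \ {x}) := by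
  intro a ha b hb hab
  rw [slope_def_field, slope_def_field]
  exact hconv.secant_mono hx ha.1 hb.1 ha.2 hb.2 hab

lemma hasDeriv17 (hconv : ConvexOn ℝ (Icc (0:ℝ) 1) f₀) {x : ℝ} (hx : x ∈ Ioo (0:ℝ) 1) :
    HasDerivWithinAt f₀ (sInf (slope f₀ x '' Ioo x 1)) (Ici x) x := by
  have hxI : x ∈ Icc (0:ℝ) 1 := ⟨hx.1.le, hx.2.le⟩
  have hmono : MonotoneOn (slope f₀ x) (Ioo x 1) := by
    apply (slope_mono17 hconv hxI).mono
    intro a ha; exact ⟨⟨hx.1.le.trans ha.1.le, ha.2.le⟩, ne_of_gt ha.1⟩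
  have hbdd : BddBelow (slope f₀ x '' Ioo x 1) := by
    refine ⟨slope f₀ x 0, ?_⟩
    rintro _ ⟨y, hy, rfl⟩
    exact (slope_mono17 hconv hxI) ⟨⟨le_refl 0, zero_le_one⟩, ne_of_lt hx.1⟩
      ⟨⟨hx.1.le.trans hy.1.le, hy.2.le⟩, ne_of_gt hy.1⟩ (hx.1.le.trans hy.1.le)
  have hne : (Ioo x 1).Nonempty := nonempty_Ioo.2 hx.2
  have := MonotoneOn.tendsto_nhdsWithin_Ioo_right hne hmono hbdd
  rw [hasDerivWithinAt_iff_tendsto_slope, Ici_sdiff_left]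
  exact this
end aux

section aux2
variable {f₀ : ℝ → ℝ}

noncomputable def g17 (f₀ : ℝ → ℝ) (x : ℝ) : ℝ := derivWithin f₀ (Ici x) x

lemma g_hasDeriv (hconv : ConvexOn ℝ (Icc (0:ℝ) 1) f₀) {x : ℝ} (hx : x ∈ Ioo (0:ℝ) 1) :
    HasDerivWithinAt f₀ (g17 f₀ x) (Ici x) x := by
  rw [g17, (hasDeriv17 hconv hx).derivWithin (uniqueDiffOn_Ici x x Set.self_mem_Ici)]
  exact hasDeriv17 hconv hx

lemma g_le_slope (hconv : ConvexOn ℝ (Icc (0:ℝ) 1) f₀) {x y : ℝ} (hx : x ∈ Ioo (0:ℝ) 1)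
    (hy : y ∈ Ioo x 1) : g17 f₀ x ≤ slope f₀ x y := by
  have h := (hasDeriv17 hconv hx).derivWithin (uniqueDiffOn_Ici x x Set.self_mem_Ici)
  rw [g17, h]
  have hbdd : BddBelow (slope f₀ x '' Ioo x 1) := by
    refine ⟨slope f₀ x 0, ?_⟩
    rintro _ ⟨z, hz, rfl⟩
    exact (slope_mono17 hconv ⟨hx.1.le, hx.2.le⟩) ⟨⟨le_refl 0, zero_le_one⟩, ne_of_lt hx.1⟩
      ⟨⟨hx.1.le.trans hz.1.le, hz.2.le⟩, ne_of_gt hz.1⟩ (hx.1.le.trans hz.1.le)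
  exact csInf_le hbdd (mem_image_of_mem _ hy)

lemma slope_le_g (hconv : ConvexOn ℝ (Icc (0:ℝ) 1) f₀) {x w : ℝ} (hx : x ∈ Ioo (0:ℝ) 1)
    (hw : w ∈ Ico (0:ℝ) x) : slope f₀ x w ≤ g17 f₀ x := by
  have h := (hasDeriv17 hconv hx).derivWithin (uniqueDiffOn_Ici x x Set.self_mem_Ici)
  rw [g17, h]
  refine le_csInf ((nonempty_Ioo.2 hx.2).image _) ?_
  rintro _ ⟨z, hz, rfl⟩
  exact (slope_mono17 hconv ⟨hx.1.le, hx.2.le⟩) ⟨⟨hw.1, (hw.2.trans hx.2).le⟩, ne_of_lt hw.2⟩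
    ⟨⟨hx.1.le.trans hz.1.le, hz.2.le⟩, ne_of_gt hz.1⟩ (hw.2.le.trans hz.1.le)

lemma g_nonpos (hconv : ConvexOn ℝ (Icc (0:ℝ) 1) f₀) (hanti : AntitoneOn f₀ (Icc (0:ℝ) 1))
    {x : ℝ} (hx : x ∈ Ioo (0:ℝ) 1) : g17 f₀ x ≤ 0 := by
  have hy : (x + 1) / 2 ∈ Ioo x 1 := ⟨by linarith [hx.2], by linarith [hx.2]⟩
  refine (g_le_slope hconv hx hy).trans ?_
  rw [slope_def_field]
  apply div_nonpos_of_nonpos_of_nonneg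
  · have := hanti ⟨hx.1.le, hx.2.le⟩ ⟨by linarith [hx.1], hy.2.le⟩ hy.1.le
    linarith
  · linarith [hy.1]

lemma g_lb (hconv : ConvexOn ℝ (Icc (0:ℝ) 1) f₀)
    (hrange : ∀ t ∈ Icc (0:ℝ) 1, f₀ t ∈ Icc (0:ℝ) 1) {x : ℝ} (hx : x ∈ Ioo (0:ℝ) 1) :
    -(1 / x) ≤ g17 f₀ x := by
  have h0 := (hrange 0 ⟨le_rfl, zero_le_one⟩).2
  have hxr := (hrange x ⟨hx.1.le, hx.2.le⟩).1
  have hx0 : (0:ℝ) < x := hx.1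
  refine le_trans ?_ (slope_le_g hconv hx ⟨le_refl 0, hx.1⟩)
  rw [slope_def_field]
  rw [show (f₀ 0 - f₀ x) / (0 - x) = (f₀ x - f₀ 0) / x by
    have hx' : x ≠ 0 := ne_of_gt hx0
    have hx'' : (0:ℝ) - x = -x := by ring
    rw [hx'', div_neg]; ring]
  rw [show -(1/x) = (-1)/x by ring]
  gcongr
  · linarith

lemma g_mono (hconv : ConvexOn ℝ (Icc (0:ℝ) 1) f₀) : MonotoneOn (g17 f₀) (Ioo (0:ℝ) 1) := by
  intro x hx y hy hxy
  rcases eq_or_lt_of_le hxy with rfl | hlt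
  · exact le_rfl
  calc g17 f₀ x ≤ slope f₀ x y := g_le_slope hconv hx ⟨hlt, hy.2⟩
    _ = slope f₀ y x := slope_comm f₀ x y
    _ ≤ g17 f₀ y := slope_le_g hconv hy ⟨hx.1.le, hlt⟩
end aux2

section aux3
variable {f₀ : ℝ → ℝ}

lemma ae_ne17 (c : ℝ) : ∀ᵐ x : ℝ, x ≠ c := by
  rw [ae_iff]
  have : {x : ℝ | ¬ x ≠ c} = {c} := by ext x; simp
  rw [this]; exact Real.volume_singleton

lemma g_intble (hconv : ConvexOn ℝ (Icc (0:ℝ) 1) f₀) (hanti : AntitoneOn f₀ (Icc (0:ℝ) 1))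
    (hrange : ∀ t ∈ Icc (0:ℝ) 1, f₀ t ∈ Icc (0:ℝ) 1) {a : ℝ} (ha : a ∈ Ioo (0:ℝ) 1) :
    IntervalIntegrable (g17 f₀) volume a 1 := by
  rw [intervalIntegrable_iff_integrableOn_Ioc_of_le ha.2.le]
  refine Integrable.mono' (integrable_const (1/a)) (measurable_derivWithin_Ici f₀).aestronglyMeasurable ?_
  have h1 : ∀ᵐ x ∂(volume.restrict (Ioc a 1)), x ≠ (1:ℝ) := ae_restrict_of_ae (ae_ne17 1)
  filter_upwards [h1, ae_restrict_mem measurableSet_Ioc] with x hx1 hx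
  have hx' : x ∈ Ioo (0:ℝ) 1 := ⟨ha.1.trans hx.1, lt_of_le_of_ne hx.2 hx1⟩
  have hub := g_nonpos hconv hanti hx'
  have hlb := g_lb hconv hrange hx'
  rw [Real.norm_eq_abs, abs_le]
  constructor
  · refine le_trans ?_ hlb
    rw [neg_le_neg_iff]
    apply one_div_le_one_div_of_le ha.1 hx.1.le
  · exact hub.trans (one_div_nonneg.2 ha.1.le)

lemma ftc17 (hconv : ConvexOn ℝ (Icc (0:ℝ) 1) f₀) (hcont : ContinuousOn f₀ (Icc (0:ℝ) 1))
    (hanti : AntitoneOn f₀ (Icc (0:ℝ) 1)) (h1 : f₀ 1 = 0)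
    (hrange : ∀ t ∈ Icc (0:ℝ) 1, f₀ t ∈ Icc (0:ℝ) 1) {a : ℝ} (ha : a ∈ Ioo (0:ℝ) 1) :
    ∫ y in a..1, g17 f₀ y = - f₀ a := by
  have := intervalIntegral.integral_eq_sub_of_hasDeriv_right_of_le ha.2.le
    (hcont.mono (Icc_subset_Icc ha.1.le le_rfl))
    (fun x hx => (g_hasDeriv hconv ⟨ha.1.trans hx.1, hx.2⟩).mono Ioi_subset_Ici_self)
    (g_intble hconv hanti hrange ha)
  rw [this, h1, zero_sub]

lemma lint_Ioo (hconv : ConvexOn ℝ (Icc (0:ℝ) 1) f₀) (hcont : ContinuousOn f₀ (Icc (0:ℝ) 1))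
    (hanti : AntitoneOn f₀ (Icc (0:ℝ) 1)) (h1 : f₀ 1 = 0)
    (hrange : ∀ t ∈ Icc (0:ℝ) 1, f₀ t ∈ Icc (0:ℝ) 1) {a : ℝ} (ha : a ∈ Ioo (0:ℝ) 1) :
    ∫⁻ x in Ioo a 1, ENNReal.ofReal (-(g17 f₀ x)) = ENNReal.ofReal (f₀ a) := by
  have hint : IntegrableOn (fun x => -(g17 f₀ x)) (Ioo a 1) volume := by
    have := (intervalIntegrable_iff_integrableOn_Ioc_of_le ha.2.le).1
      (g_intble hconv hanti hrange ha)
    exact (this.mono_set Ioo_subset_Ioc_self).neg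
  have hnn : 0 ≤ᵐ[volume.restrict (Ioo a 1)] (fun x => -(g17 f₀ x)) := by
    filter_upwards [ae_restrict_mem measurableSet_Ioo] with x hx
    simp only [Pi.zero_apply, neg_nonneg]
    exact g_nonpos hconv hanti ⟨ha.1.trans hx.1, hx.2⟩
  rw [← ofReal_integral_eq_lintegral_ofReal hint hnn]
  congr 1
  rw [integral_neg, ← integral_Ioc_eq_integral_Ioo, ← intervalIntegral.integral_of_le ha.2.le,
    ftc17 hconv hcont hanti h1 hrange ha, neg_neg]

lemma lint_Ioo01 (hconv : ConvexOn ℝ (Icc (0:ℝ) 1) f₀) (hcont : ContinuousOn f₀ (Icc (0:ℝ) 1))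
    (hanti : AntitoneOn f₀ (Icc (0:ℝ) 1)) (h1 : f₀ 1 = 0)
    (hrange : ∀ t ∈ Icc (0:ℝ) 1, f₀ t ∈ Icc (0:ℝ) 1) :
    ∫⁻ x in Ioo 0 1, ENNReal.ofReal (-(g17 f₀ x)) = ENNReal.ofReal (f₀ 0) := by
  set ν := volume.withDensity (fun x => ENNReal.ofReal (-(g17 f₀ x))) with hν
  have hmeas : Measurable (fun x => ENNReal.ofReal (-(g17 f₀ x))) :=
    ENNReal.measurable_ofReal.comp (measurable_derivWithin_Ici f₀).neg
  have hap : ∀ s : Set ℝ, MeasurableSet s →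
      ν s = ∫⁻ x in s, ENNReal.ofReal (-(g17 f₀ x)) := fun s hs => withDensity_apply _ hs
  set u : ℕ → ℝ := fun n => 1 / (n + 2) with hu
  have hu_mem : ∀ n, u n ∈ Ioo (0:ℝ) 1 := by
    intro n
    constructor
    · positivity
    · rw [div_lt_one (by positivity)]; push_cast; linarith [Nat.cast_nonneg (α := ℝ) n]
  have hu_anti : ∀ n m : ℕ, n ≤ m → u m ≤ u n := by
    intro n m h
    apply one_div_le_one_div_of_le (by positivity)
    push_cast
    have := (Nat.cast_le (α := ℝ)).2 h
    linarith
  have hunion : Ioo (0:ℝ) 1 = ⋃ n, Ioo (u n) 1 := by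
    ext x
    simp only [mem_iUnion, mem_Ioo]
    constructor
    · rintro ⟨hx0, hx1⟩
      obtain ⟨n, hn⟩ := exists_nat_one_div_lt hx0
      exact ⟨n, by calc u n = 1/(n+2) := rfl
        _ ≤ 1/(n+1) := by apply one_div_le_one_div_of_le (by positivity); push_cast; linarith
        _ < x := hn, hx1⟩
    · rintro ⟨n, hn, hx1⟩
      exact ⟨(hu_mem n).1.trans hn, hx1⟩
  rw [← hap _ measurableSet_Ioo, hunion, Directed.measure_iUnion (s := fun n => Ioo (u n) 1) ?_]
  · have hval : ∀ n, ν (Ioo (u n) 1) = ENNReal.ofReal (f₀ (u n)) := by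
      intro n
      rw [hap _ measurableSet_Ioo, lint_Ioo hconv hcont hanti h1 hrange (hu_mem n)]
    simp_rw [hval]
    have hmono : Monotone (fun n => ENNReal.ofReal (f₀ (u n))) := by
      intro n m h
      exact ENNReal.ofReal_le_ofReal (hanti ⟨(hu_mem m).1.le, (hu_mem m).2.le⟩
        ⟨(hu_mem n).1.le, (hu_mem n).2.le⟩ (hu_anti n m h))
    refine iSup_eq_of_tendsto hmono ?_
    have hu0 : Filter.Tendsto u Filter.atTop (nhds 0) := by
      apply squeeze_zero (fun n => (hu_mem n).1.le) (g := fun n : ℕ => 1/((n:ℝ)+1))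
        ?_ tendsto_one_div_add_atTop_nhds_zero_nat
      intro n
      apply one_div_le_one_div_of_le (by positivity)
      linarith
    have hcw : Filter.Tendsto (fun n => f₀ (u n)) Filter.atTop (nhds (f₀ 0)) := by
      apply (hcont.continuousWithinAt ⟨le_rfl, zero_le_one⟩).tendsto.comp
      rw [tendsto_nhdsWithin_iff]
      exact ⟨hu0, Filter.Eventually.of_forall fun n => ⟨(hu_mem n).1.le, (hu_mem n).2.le⟩⟩
    exact (ENNReal.continuous_ofReal.tendsto _).comp hcw
  · intro n m
    rcases le_total n m with h | h
    · exact ⟨m, Ioo_subset_Ioo_left (hu_anti n m h), subset_rfl⟩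
    · exact ⟨n, subset_rfl, Ioo_subset_Ioo_left (hu_anti m n h)⟩
end aux3

section aux4
variable {f₀ : ℝ → ℝ}

lemma rmeas17 : Measurable fun y => ENNReal.ofReal (rdens f₀ y) := by
  apply ENNReal.measurable_ofReal.comp
  apply Measurable.sub
  · exact measurable_const.indicator measurableSet_Ico
  · exact (measurable_derivWithin_Ici f₀).mul (measurable_const.indicator measurableSet_Icc)

lemma lint_R {ψ : ℝ → ENNReal} (hψ : Measurable ψ) :
    ∫⁻ x, ψ x ∂(volume.withDensity fun y => ENNReal.ofReal (rdens f₀ y)) =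
      (∫⁻ x in Ico (f₀ 0 - 1) 0, ψ x)
        + ∫⁻ x in Ioo (0:ℝ) 1, ψ x * ENNReal.ofReal (-(g17 f₀ x)) := by
  rw [lintegral_withDensity_eq_lintegral_mul volume rmeas17 hψ]
  have hae : (fun x => ((fun y => ENNReal.ofReal (rdens f₀ y)) * ψ) x) =ᵐ[volume]
      (fun x => (Ico (f₀ 0 - 1) 0).indicator ψ x
        + (Ioo (0:ℝ) 1).indicator (fun x => ψ x * ENNReal.ofReal (-(g17 f₀ x))) x) := by
    filter_upwards [ae_ne17 0, ae_ne17 1] with x hx0 hx1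
    simp only [Pi.mul_apply]
    rcases lt_trichotomy x 0 with hneg | hzero | hpos
    · have hIcc : x ∉ Icc (0:ℝ) 1 := fun h => absurd h.1 (not_le.2 hneg)
      have hIoo : x ∉ Ioo (0:ℝ) 1 := fun h => absurd h.1 (lt_asymm hneg)
      rw [indicator_of_notMem hIoo, add_zero, rdens, indicator_of_notMem hIcc, mul_zero,
        sub_zero]
      by_cases hm : x ∈ Ico (f₀ 0 - 1) 0
      · rw [indicator_of_mem hm, indicator_of_mem hm, ENNReal.ofReal_one, one_mul]
      · rw [indicator_of_notMem hm, indicator_of_notMem hm, ENNReal.ofReal_zero, zero_mul]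
    · exact absurd hzero hx0
    · have hIco : x ∉ Ico (f₀ 0 - 1) 0 := fun h => absurd h.2 (not_lt.2 hpos.le)
      rw [indicator_of_notMem hIco, rdens, indicator_of_notMem hIco, zero_sub, zero_add]
      rcases lt_trichotomy x 1 with hlt | heq | hgt
      · have hIoo : x ∈ Ioo (0:ℝ) 1 := ⟨hpos, hlt⟩
        have hIcc2 : x ∈ Icc (0:ℝ) 1 := ⟨hpos.le, hlt.le⟩
        rw [indicator_of_mem hIoo, indicator_of_mem hIcc2, mul_one, g17, mul_comm]
      · exact absurd heq hx1
      · have hIcc : x ∉ Icc (0:ℝ) 1 := fun h => absurd h.2 (not_le.2 hgt)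
        have hIoo : x ∉ Ioo (0:ℝ) 1 := fun h => absurd h.2 (lt_asymm hgt)
        rw [indicator_of_notMem hIoo, indicator_of_notMem hIcc, mul_zero, neg_zero,
          ENNReal.ofReal_zero, zero_mul]
  rw [lintegral_congr_ae hae, lintegral_add_left (hψ.indicator measurableSet_Ico),
    lintegral_indicator measurableSet_Ico, lintegral_indicator measurableSet_Ioo]

lemma lintF (hconv : ConvexOn ℝ (Icc (0:ℝ) 1) f₀) (hcont : ContinuousOn f₀ (Icc (0:ℝ) 1))
    (hanti : AntitoneOn f₀ (Icc (0:ℝ) 1)) (h1 : f₀ 1 = 0)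
    (hrange : ∀ t ∈ Icc (0:ℝ) 1, f₀ t ∈ Icc (0:ℝ) 1) {a : ℝ} (ha : a ∈ Icc (0:ℝ) 1) :
    ∫⁻ x in Ioo a 1, ENNReal.ofReal (-(g17 f₀ x)) = ENNReal.ofReal (f₀ a) := by
  rcases eq_or_lt_of_le ha.1 with h0 | h0
  · rw [← h0]; exact lint_Ioo01 hconv hcont hanti h1 hrange
  rcases eq_or_lt_of_le ha.2 with h2 | h2
  · rw [h2, Ioo_self, Measure.restrict_empty, lintegral_zero_measure, h1,
      ENNReal.ofReal_zero]
  · exact lint_Ioo hconv hcont hanti h1 hrange ⟨h0, h2⟩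
end aux4

section aux5
variable {f₀ : ℝ → ℝ}

lemma core17 (hconv : ConvexOn ℝ (Icc (0:ℝ) 1) f₀) (hcont : ContinuousOn f₀ (Icc (0:ℝ) 1))
    (hanti : AntitoneOn f₀ (Icc (0:ℝ) 1)) (h1 : f₀ 1 = 0)
    (hrange : ∀ t ∈ Icc (0:ℝ) 1, f₀ t ∈ Icc (0:ℝ) 1) {α : ℝ} (hα : α ∈ Ioo (0:ℝ) 1)
    {φ : ℝ → ℝ} (hφm : Measurable φ) (hφ01 : ∀ x, φ x ∈ Icc (0:ℝ) 1)
    (hB : ENNReal.ofReal (1 - α) ≤ ∫⁻ x in Ioo (0:ℝ) 1, ENNReal.ofReal (1 - φ x)) :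
    ENNReal.ofReal (f₀ α) ≤
      ∫⁻ x in Ioo (0:ℝ) 1, ENNReal.ofReal (1 - φ x) * ENNReal.ofReal (-(g17 f₀ x)) := by
  set ψ : ℝ → ENNReal := fun x => ENNReal.ofReal (1 - φ x) with hψdef
  set χ : ℝ → ENNReal := fun x => ENNReal.ofReal (φ x) with hχdef
  set G : ℝ → ENNReal := fun x => ENNReal.ofReal (-(g17 f₀ x)) with hGdef
  have hψm : Measurable ψ := ENNReal.measurable_ofReal.comp (measurable_const.sub hφm)
  have hχm : Measurable χ := ENNReal.measurable_ofReal.comp hφm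
  have hGm : Measurable G := ENNReal.measurable_ofReal.comp (measurable_derivWithin_Ici f₀).neg
  have hψχ : ∀ x, ψ x + χ x = 1 := by
    intro x
    rw [hψdef, hχdef, ← ENNReal.ofReal_add (by linarith [(hφ01 x).2]) (hφ01 x).1]
    norm_num
  set c : ENNReal := ENNReal.ofReal (-(g17 f₀ α)) with hcdef
  have hsplit : Ioc 0 α ∪ Ioo α 1 = Ioo (0:ℝ) 1 := Ioc_union_Ioo_eq_Ioo hα.1.le hα.2
  have hdisj : Disjoint (Ioc (0:ℝ) α) (Ioo α 1) :=
    disjoint_left.2 fun x hx hx' => absurd hx.2 (not_le.2 hx'.1)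
  -- split the three integrals
  have hBsplit : ∀ F : ℝ → ENNReal, ∫⁻ x in Ioo (0:ℝ) 1, F x
      = (∫⁻ x in Ioc (0:ℝ) α, F x) + ∫⁻ x in Ioo α 1, F x := by
    intro F
    rw [← hsplit, lintegral_union measurableSet_Ioo hdisj]
  set A1 := ∫⁻ x in Ioc (0:ℝ) α, ψ x * G x with hA1
  set A2 := ∫⁻ x in Ioo α 1, ψ x * G x with hA2
  set B1 := ∫⁻ x in Ioc (0:ℝ) α, ψ x with hB1
  set B2 := ∫⁻ x in Ioo α 1, ψ x with hB2
  set C2 := ∫⁻ x in Ioo α 1, χ x with hC2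
  have hcfin : c ≠ ⊤ := ENNReal.ofReal_ne_top
  have hB2fin : B2 ≠ ⊤ := by
    have : B2 ≤ volume (Ioo α 1) := by
      rw [hB2, ← setLIntegral_one]
      apply lintegral_mono
      intro x
      exact ENNReal.ofReal_le_one.2 (by linarith [(hφ01 x).1])
    exact ne_top_of_le_ne_top (by simp [Real.volume_Ioo]) this
  -- A1 ≥ B1 * c
  have hA1ge : B1 * c ≤ A1 := by
    rw [hB1, ← lintegral_mul_const c hψm]
    apply lintegral_mono_ae
    filter_upwards [ae_restrict_mem measurableSet_Ioc] with x hx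
    have hxm : x ∈ Ioo (0:ℝ) 1 := ⟨hx.1, hx.2.trans_lt hα.2⟩
    have : g17 f₀ x ≤ g17 f₀ α := g_mono hconv hxm hα hx.2
    exact mul_le_mul_right (ENNReal.ofReal_le_ofReal (by linarith)) _
  -- F ≤ A2 + C2 * c
  have hF : ∫⁻ x in Ioo α 1, G x = ENNReal.ofReal (f₀ α) :=
    lintF hconv hcont hanti h1 hrange ⟨hα.1.le, hα.2.le⟩
  have hFle : ENNReal.ofReal (f₀ α) ≤ A2 + C2 * c := by
    rw [← hF]
    have heq : ∫⁻ x in Ioo α 1, G x = A2 + ∫⁻ x in Ioo α 1, χ x * G x := by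
      rw [hA2, ← lintegral_add_left (f := fun x => ψ x * G x) (hψm.mul hGm)]
      apply lintegral_congr
      intro x
      rw [← add_mul, hψχ, one_mul]
    rw [heq]
    apply add_le_add_right
    rw [hC2, ← lintegral_mul_const c hχm]
    apply lintegral_mono_ae
    filter_upwards [ae_restrict_mem measurableSet_Ioo] with x hx
    have hxm : x ∈ Ioo (0:ℝ) 1 := ⟨hα.1.trans hx.1, hx.2⟩
    have : g17 f₀ α ≤ g17 f₀ x := g_mono hconv hα hxm hx.1.le
    exact mul_le_mul_right (ENNReal.ofReal_le_ofReal (by linarith)) _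
  -- C2 ≤ B1
  have hC2B1 : C2 ≤ B1 := by
    have hsum : C2 + B2 = ENNReal.ofReal (1 - α) := by
      rw [hC2, hB2, ← lintegral_add_left hχm]
      have : ∫⁻ x in Ioo α 1, (χ x + ψ x) = volume (Ioo α 1) := by
        rw [← setLIntegral_one]
        apply lintegral_congr
        intro x
        rw [add_comm, hψχ]
      rw [this, Real.volume_Ioo]
    have hBsum : ENNReal.ofReal (1 - α) ≤ B1 + B2 := by
      rw [hB1, hB2, ← hBsplit]
      exact hB
    rw [← hsum] at hBsum
    exact (ENNReal.add_le_add_iff_right hB2fin).1 hBsum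
  calc ENNReal.ofReal (f₀ α) ≤ A2 + C2 * c := hFle
    _ ≤ A2 + B1 * c := add_le_add_right (mul_le_mul_left hC2B1 c) A2
    _ ≤ A2 + A1 := add_le_add_right hA1ge A2
    _ = A1 + A2 := add_comm _ _
    _ = _ := (hBsplit _).symm
end aux5

section aux6
variable {f₀ : ℝ → ℝ}

lemma Q_Ioi (hconv : ConvexOn ℝ (Icc (0:ℝ) 1) f₀) (hcont : ContinuousOn f₀ (Icc (0:ℝ) 1))
    (hanti : AntitoneOn f₀ (Icc (0:ℝ) 1)) (h1 : f₀ 1 = 0)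
    (hrange : ∀ t ∈ Icc (0:ℝ) 1, f₀ t ∈ Icc (0:ℝ) 1) {α : ℝ} (hα : α ∈ Icc (0:ℝ) 1) :
    (volume.withDensity fun y => ENNReal.ofReal (rdens f₀ y)) (Ioi α)
      = ENNReal.ofReal (f₀ α) := by
  rw [← lintegral_indicator_one measurableSet_Ioi,
    lint_R (measurable_one.indicator measurableSet_Ioi)]
  have hfirst : (∫⁻ x in Ico (f₀ 0 - 1) 0, (Ioi α).indicator 1 x) = 0 := by
    have hz : ∀ᵐ x ∂volume, x ∈ Ico (f₀ 0 - 1) 0 → (Ioi α).indicator (1 : ℝ → ENNReal) x = 0 := by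
      apply ae_of_all
      intro x hx
      have : x ∉ Ioi α := fun h => absurd (hα.1.trans_lt h) (not_lt.2 hx.2.le)
      exact indicator_of_notMem this 1
    rw [setLIntegral_congr_fun_ae measurableSet_Ico hz, lintegral_zero]
  rw [hfirst, zero_add]
  have hsecond : ∀ x : ℝ, (Ioi α).indicator 1 x * ENNReal.ofReal (-(g17 f₀ x))
      = (Ioi α).indicator (fun x => ENNReal.ofReal (-(g17 f₀ x))) x := by
    intro x
    by_cases h : x ∈ Ioi α
    · rw [indicator_of_mem h, indicator_of_mem h, Pi.one_apply, one_mul]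
    · rw [indicator_of_notMem h, indicator_of_notMem h, zero_mul]
  rw [lintegral_congr hsecond, lintegral_indicator measurableSet_Ioi,
    Measure.restrict_restrict measurableSet_Ioi]
  have hset : Ioi α ∩ Ioo 0 1 = Ioo α 1 := by
    ext x
    simp only [mem_inter_iff, mem_Ioi, mem_Ioo]
    exact ⟨fun ⟨h1', h2'⟩ => ⟨h1', h2'.2⟩, fun ⟨h1', h2'⟩ => ⟨h1', hα.1.trans_lt h1', h2'⟩⟩
  rw [hset]
  exact lintF hconv hcont hanti h1 hrange hα

lemma Q_fin (hconv : ConvexOn ℝ (Icc (0:ℝ) 1) f₀) (hcont : ContinuousOn f₀ (Icc (0:ℝ) 1))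
    (hanti : AntitoneOn f₀ (Icc (0:ℝ) 1)) (h1 : f₀ 1 = 0)
    (hrange : ∀ t ∈ Icc (0:ℝ) 1, f₀ t ∈ Icc (0:ℝ) 1) :
    (volume.withDensity fun y => ENNReal.ofReal (rdens f₀ y)) univ ≠ ⊤ := by
  rw [← lintegral_indicator_one MeasurableSet.univ, lint_R (measurable_one.indicator MeasurableSet.univ)]
  simp only [indicator_univ, Pi.one_apply, one_mul]
  rw [setLIntegral_one, lintF hconv hcont hanti h1 hrange ⟨le_rfl, zero_le_one⟩]
  exact ENNReal.add_ne_top.2 ⟨by simp [Real.volume_Ico], ENNReal.ofReal_ne_top⟩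
end aux6

section aux7
variable {f₀ : ℝ → ℝ}

lemma ofReal_f0_le (hcont : ContinuousOn f₀ (Icc (0:ℝ) 1)) {X : ENNReal}
    (h : ∀ a ∈ Ioo (0:ℝ) 1, ENNReal.ofReal (f₀ a) ≤ X) : ENNReal.ofReal (f₀ 0) ≤ X := by
  set u : ℕ → ℝ := fun n => 1 / (n + 2) with hu
  have hu_mem : ∀ n, u n ∈ Ioo (0:ℝ) 1 := by
    intro n
    constructor
    · positivity
    · rw [div_lt_one (by positivity)]; linarith [Nat.cast_nonneg (α := ℝ) n]
  have hu0 : Filter.Tendsto u Filter.atTop (nhds 0) := by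
    apply squeeze_zero (fun n => (hu_mem n).1.le) (g := fun n : ℕ => 1/((n:ℝ)+1))
      ?_ tendsto_one_div_add_atTop_nhds_zero_nat
    intro n
    apply one_div_le_one_div_of_le (by positivity)
    linarith
  have hcw : Filter.Tendsto (fun n => ENNReal.ofReal (f₀ (u n))) Filter.atTop
      (nhds (ENNReal.ofReal (f₀ 0))) := by
    apply (ENNReal.continuous_ofReal.tendsto _).comp
    apply (hcont.continuousWithinAt ⟨le_rfl, zero_le_one⟩).tendsto.comp
    rw [tendsto_nhdsWithin_iff]
    exact ⟨hu0, Filter.Eventually.of_forall fun n => ⟨(hu_mem n).1.le, (hu_mem n).2.le⟩⟩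
  exact le_of_tendsto hcw (Filter.Eventually.of_forall fun n => h (u n) (hu_mem n))

lemma lower17 (hconv : ConvexOn ℝ (Icc (0:ℝ) 1) f₀) (hcont : ContinuousOn f₀ (Icc (0:ℝ) 1))
    (hanti : AntitoneOn f₀ (Icc (0:ℝ) 1)) (h1 : f₀ 1 = 0)
    (hrange : ∀ t ∈ Icc (0:ℝ) 1, f₀ t ∈ Icc (0:ℝ) 1) {α : ℝ} (hα : α ∈ Icc (0:ℝ) 1)
    {φ : ℝ → ℝ} (hφm : Measurable φ) (h01 : ∀ x, φ x ∈ Icc (0:ℝ) 1)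
    (hcon : (∫ x, φ x ∂(volume.restrict (Icc (0:ℝ) 1))) ≤ α) :
    f₀ α ≤ ∫ x, (1 - φ x) ∂(volume.withDensity fun y => ENNReal.ofReal (rdens f₀ y)) := by
  set Q := volume.withDensity fun y => ENNReal.ofReal (rdens f₀ y) with hQ
  have hψm : Measurable fun x => ENNReal.ofReal (1 - φ x) :=
    ENNReal.measurable_ofReal.comp (measurable_const.sub hφm)
  have hIeq : ∫ x, (1 - φ x) ∂Q = (∫⁻ x, ENNReal.ofReal (1 - φ x) ∂Q).toReal :=
    integral_eq_lintegral_of_nonneg_ae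
      (ae_of_all _ fun x => by simp only [Pi.zero_apply]; linarith [(h01 x).2])
      (measurable_const.sub hφm).aestronglyMeasurable
  have hQfin : (∫⁻ x, ENNReal.ofReal (1 - φ x) ∂Q) ≠ ⊤ := by
    refine ne_top_of_le_ne_top (Q_fin hconv hcont hanti h1 hrange) ?_
    rw [← lintegral_one]
    exact lintegral_mono fun x => ENNReal.ofReal_le_one.2 (by linarith [(h01 x).1])
  suffices key : ENNReal.ofReal (f₀ α) ≤ ∫⁻ x, ENNReal.ofReal (1 - φ x) ∂Q by
    rw [hIeq]
    calc f₀ α = (ENNReal.ofReal (f₀ α)).toReal := (ENNReal.toReal_ofReal (hrange α hα).1).symm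
      _ ≤ _ := ENNReal.toReal_mono hQfin key
  rw [hQ, lint_R hψm]
  rcases eq_or_lt_of_le hα.2 with h2 | h2
  · rw [h2, h1, ENNReal.ofReal_zero]
    exact bot_le
  -- constraint in lintegral form
  have hLfin : (∫⁻ x in Icc (0:ℝ) 1, ENNReal.ofReal (φ x)) ≠ ⊤ := by
    refine ne_top_of_le_ne_top (by simp [Real.volume_Icc] : volume (Icc (0:ℝ) 1) ≠ ⊤) ?_
    rw [← setLIntegral_one]
    exact lintegral_mono fun x => ENNReal.ofReal_le_one.2 (h01 x).2
  have hL : (∫⁻ x in Icc (0:ℝ) 1, ENNReal.ofReal (φ x)) ≤ ENNReal.ofReal α := by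
    rw [ENNReal.le_ofReal_iff_toReal_le hLfin hα.1]
    rw [← integral_eq_lintegral_of_nonneg_ae
      (ae_of_all _ fun x => by simp only [Pi.zero_apply]; exact (h01 x).1)
      hφm.aestronglyMeasurable]
    exact hcon
  have hBc : ENNReal.ofReal (1 - α) ≤ ∫⁻ x in Ioo (0:ℝ) 1, ENNReal.ofReal (1 - φ x) := by
    have hL' : (∫⁻ x in Ioo (0:ℝ) 1, ENNReal.ofReal (φ x)) ≤ ENNReal.ofReal α := by
      rw [Measure.restrict_congr_set Ioo_ae_eq_Icc]
      exact hL
    have hsum : (∫⁻ x in Ioo (0:ℝ) 1, ENNReal.ofReal (1 - φ x))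
        + (∫⁻ x in Ioo (0:ℝ) 1, ENNReal.ofReal (φ x)) = 1 := by
      rw [← lintegral_add_left hψm]
      have : ∫⁻ x in Ioo (0:ℝ) 1, (ENNReal.ofReal (1 - φ x) + ENNReal.ofReal (φ x))
          = volume (Ioo (0:ℝ) 1) := by
        rw [← setLIntegral_one]
        apply lintegral_congr
        intro x
        rw [← ENNReal.ofReal_add (by linarith [(h01 x).2]) (h01 x).1]
        norm_num
      rw [this, Real.volume_Ioo]
      norm_num
    calc ENNReal.ofReal (1 - α) = 1 - ENNReal.ofReal α := by
          rw [ENNReal.ofReal_sub _ hα.1, ENNReal.ofReal_one]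
      _ ≤ 1 - ∫⁻ x in Ioo (0:ℝ) 1, ENNReal.ofReal (φ x) := tsub_le_tsub_left hL' 1
      _ ≤ _ := by
          rw [tsub_le_iff_right]
          exact le_of_eq hsum.symm
  rcases eq_or_lt_of_le hα.1 with h0 | h0
  · rw [← h0]
    refine ofReal_f0_le hcont fun a ha => ?_
    refine le_trans (core17 hconv hcont hanti h1 hrange ha hφm h01 ?_) le_add_self
    refine le_trans (ENNReal.ofReal_le_ofReal (by linarith [ha.1] : 1 - a ≤ 1 - α)) hBc
  · exact le_trans (core17 hconv hcont hanti h1 hrange ⟨h0, h2⟩ hφm h01 hBc) le_add_self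
end aux7

section final
variable {f₀ : ℝ → ℝ}

lemma upper17 (hconv : ConvexOn ℝ (Icc (0:ℝ) 1) f₀) (hcont : ContinuousOn f₀ (Icc (0:ℝ) 1))
    (hanti : AntitoneOn f₀ (Icc (0:ℝ) 1)) (h1 : f₀ 1 = 0)
    (hrange : ∀ t ∈ Icc (0:ℝ) 1, f₀ t ∈ Icc (0:ℝ) 1) {α : ℝ} (hα : α ∈ Icc (0:ℝ) 1) :
    f₀ α ∈ {b : ℝ | ∃ φ : ℝ → ℝ, Measurable φ ∧ (∀ x, φ x ∈ Icc (0:ℝ) 1) ∧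
      (∫ x, φ x ∂(volume.restrict (Icc (0:ℝ) 1))) ≤ α ∧
      b = ∫ x, (1 - φ x) ∂(volume.withDensity fun y => ENNReal.ofReal (rdens f₀ y))} := by
  refine ⟨(Iic α).indicator (fun _ => (1:ℝ)),
    measurable_const.indicator measurableSet_Iic, ?_, ?_, ?_⟩
  · intro x
    by_cases h : x ∈ Iic α
    · rw [indicator_of_mem h]; exact ⟨zero_le_one, le_rfl⟩
    · rw [indicator_of_notMem h]; exact ⟨le_rfl, zero_le_one⟩
  · have heq : ∫ x, (Iic α).indicator (fun _ => (1:ℝ)) x ∂(volume.restrict (Icc (0:ℝ) 1))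
        = ((volume.restrict (Icc (0:ℝ) 1)) (Iic α)).toReal :=
      integral_indicator_one measurableSet_Iic
    rw [heq, Measure.restrict_apply measurableSet_Iic]
    have hset : Iic α ∩ Icc 0 1 = Icc (0:ℝ) α := by
      ext x
      simp only [mem_inter_iff, mem_Iic, mem_Icc]
      exact ⟨fun ⟨ha', h0', _⟩ => ⟨h0', ha'⟩, fun ⟨h0', ha'⟩ => ⟨ha', h0', ha'.trans hα.2⟩⟩
    rw [hset, Real.volume_Icc, sub_zero, ENNReal.toReal_ofReal hα.1]
  · have hfun : (fun x => 1 - (Iic α).indicator (fun _ => (1:ℝ)) x)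
        = (Ioi α).indicator (fun _ => (1:ℝ)) := by
      funext x
      by_cases h : x ≤ α
      · rw [indicator_of_mem (mem_Iic.2 h), indicator_of_notMem (by simpa using h), sub_self]
      · rw [indicator_of_notMem (by simpa using h), indicator_of_mem (mem_Ioi.2 (not_le.1 h)),
          sub_zero]
    rw [hfun]
    have heq : ∫ x, (Ioi α).indicator (fun _ => (1:ℝ)) x
          ∂(volume.withDensity fun y => ENNReal.ofReal (rdens f₀ y))
        = ((volume.withDensity fun y => ENNReal.ofReal (rdens f₀ y)) (Ioi α)).toReal :=
      integral_indicator_one measurableSet_Ioi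
    rw [heq, Q_Ioi hconv hcont hanti h1 hrange hα, ENNReal.toReal_ofReal (hrange α hα).1]

/-- with `P` uniform on `[0,1]` and `R` the measure with density `r`,
the trade-off function of `(P,R)` equals `f₀` on `[0,1]`. -/
theorem stmt17 (f₀ : ℝ → ℝ)
    (hconv : ConvexOn ℝ (Icc (0:ℝ) 1) f₀) (hcont : ContinuousOn f₀ (Icc (0:ℝ) 1))
    (hanti : AntitoneOn f₀ (Icc (0:ℝ) 1)) (h1 : f₀ 1 = 0)
    (hrange : ∀ t ∈ Icc (0:ℝ) 1, f₀ t ∈ Icc (0:ℝ) 1) :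
    ∀ α ∈ Icc (0:ℝ) 1,
      tradeoff (volume.restrict (Icc (0:ℝ) 1))
        (volume.withDensity (fun y => ENNReal.ofReal (rdens f₀ y))) α = f₀ α := by
  intro α hα
  have hupper := upper17 hconv hcont hanti h1 hrange hα
  have hlow : ∀ b ∈ {b : ℝ | ∃ φ : ℝ → ℝ, Measurable φ ∧ (∀ x, φ x ∈ Icc (0:ℝ) 1) ∧
      (∫ x, φ x ∂(volume.restrict (Icc (0:ℝ) 1))) ≤ α ∧
      b = ∫ x, (1 - φ x) ∂(volume.withDensity fun y => ENNReal.ofReal (rdens f₀ y))},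
      f₀ α ≤ b := by
    rintro b ⟨φ, hφm, h01, hcon, rfl⟩
    exact lower17 hconv hcont hanti h1 hrange hα hφm h01 hcon
  exact le_antisymm (csInf_le ⟨f₀ α, hlow⟩ hupper) (le_csInf ⟨f₀ α, hupper⟩ hlow)
end final
end
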